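/- Let α ∈ (1/3,1/2), c₁,c₂ > 0 with |c₁−c₂| = 1, I a bounded interval of ℝ₊, and let β_n(λ) = 4G_n(λ)/(F_n(λ)F_{n-1}(λ)) − 1 with F_n, G_n the Poincaré coefficients of the Jacobi matrix with q_n = n^α, b_n = n^α c_n (c 2-periodic with values c₁, c₂). Then uniformly for λ ∈ I, as n → ∞: β_n(λ) = −(2^{1-α}/(c₁c₂))λ n^{-α} + (2^{-2α}/(c₁c₂))(3/(c₁c₂)+1)λ² n^{-2α} + (α/(2c₁c₂))n^{-1} − (2^{-3α}/(c₁c₂)²)(3 + 4/(c₁c₂))λ³ n^{-3α} + Õ_I(n^{-1-α}). -/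

import Mathlib

/-- Uniform big-O on `I`: `r_n(λ) = Õ_I(h_n)`. -/
def OtildeI (I : Set ℝ) (r : ℕ → ℝ → ℝ) (h : ℕ → ℝ) : Prop :=
  ∃ C > (0 : ℝ), ∃ N : ℕ, ∀ n > N, ∀ t ∈ I, |r n t| ≤ C * |h n|

/-- The 2-periodically modulated weights `b_n = n^α c_n`, `c_{2n-1} = c₁`, `c_{2n} = c₂`. -/
noncomputable def jacobiWeight (α c₁ c₂ : ℝ) (n : ℕ) : ℝ :=
  (n : ℝ) ^ α * (if Odd n then c₁ else c₂)

/-- The diagonal `q_n = n^α`. -/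
noncomputable def jacobiDiag (α : ℝ) (n : ℕ) : ℝ := (n : ℝ) ^ α

/-- The Poincaré coefficient `F_n(λ)`. -/
noncomputable def jacobiF (b q : ℕ → ℝ) (n : ℕ) (t : ℝ) : ℝ :=
  (q (2 * n + 2) - t) * (b (2 * n)) ^ 2 / ((q (2 * n) - t) * b (2 * n + 1) * b (2 * n + 2)) -
    (q (2 * n + 1) - t) * (q (2 * n + 2) - t) / (b (2 * n + 1) * b (2 * n + 2)) +
    b (2 * n + 1) / b (2 * n + 2)

/-- The Poincaré coefficient `G_n(λ)`. -/
noncomputable def jacobiG (b q : ℕ → ℝ) (n : ℕ) (t : ℝ) : ℝ :=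
  (q (2 * n + 2) - t) * b (2 * n - 1) * b (2 * n) /
    ((q (2 * n) - t) * b (2 * n + 1) * b (2 * n + 2))

/-- The Riccati coefficient `β_n(λ) = 4G_n/(F_n F_{n-1}) − 1`. -/
noncomputable def jacobiBeta (b q : ℕ → ℝ) (n : ℕ) (t : ℝ) : ℝ :=
  4 * jacobiG b q n t / (jacobiF b q n t * jacobiF b q (n - 1) t) - 1





-- ===== auxiliary machinery =====
set_option maxRecDepth 100000
set_option maxHeartbeats 4000000
noncomputable def polyA (al c1 c2 u w : ℝ) : ℝ := (((((((((-2)*al^(2:ℕ)*c1^(2:ℕ)*c2^(4:ℕ) + (2)*al^(2:ℕ)*c1^(2:ℕ)*c2^(6:ℕ)) + ((5)*al^(2:ℕ)*c1^(3:ℕ)*c2^(3:ℕ) + (-10)*al^(2:ℕ)*c1^(3:ℕ)*c2^(5:ℕ))) + (((4)*al^(2:ℕ)*c1^(3:ℕ)*c2^(7:ℕ) + (-2)*al^(2:ℕ)*c1^(4:ℕ)*c2^(2:ℕ)) + ((4)*al^(2:ℕ)*c1^(4:ℕ)*c2^(4:ℕ) + ((-8)*al^(2:ℕ)*c1^(5:ℕ)*c2^(3:ℕ)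 + (-6)*al^(2:ℕ)*c1^(5:ℕ)*c2^(5:ℕ))))) + ((((2)*al^(2:ℕ)*c1^(6:ℕ)*c2^(2:ℕ) + (2)*al^(2:ℕ)*c1^(7:ℕ)*c2^(3:ℕ)) + ((-10)*w*al^(2:ℕ)*c1^(2:ℕ)*c2^(2:ℕ) + (30)*w*al^(2:ℕ)*c1^(2:ℕ)*c2^(4:ℕ))) + (((-14)*w*al^(2:ℕ)*c1^(2:ℕ)*c2^(6:ℕ) + (-20)*w*al^(2:ℕ)*c1^(3:ℕ)*c2^(3:ℕ)) + ((24)*w*al^(2:ℕ)*c1^(3:ℕ)*c2^(5:ℕ) + ((22)*w*al^(2:ℕ)*c1^(4:ℕ)*c2^(2:ℕ) + (-20)*w*al^(2:ℕ)*c1^(4:ℕ)*c2^(4:ℕ)))))) + (((((20)*w*al^(2:ℕ)*c1^(5:ℕ)*c2^(3:ℕ) + (-12)*w*al^(2:ℕ)*c1^(5:ℕ)*c2^(5:ℕ)) + ((-6)*w*al^(2:ℕ)*c1^(6:ℕ)*c2^(2:ℕ) + (-4)*w*al^(2:ℕ)*c1^(7:ℕ)*c2^(3:ℕ))) + (((15)*w^(2:ℕ)*al^(2:ℕ)*c1*c2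 + (-30)*w^(2:ℕ)*al^(2:ℕ)*c1*c2^(3:ℕ)) + ((12)*w^(2:ℕ)*al^(2:ℕ)*c1*c2^(5:ℕ) + ((45)*w^(2:ℕ)*al^(2:ℕ)*c1^(2:ℕ)*c2^(2:ℕ) + (-76)*w^(2:ℕ)*al^(2:ℕ)*c1^(2:ℕ)*c2^(4:ℕ))))) + ((((8)*w^(2:ℕ)*al^(2:ℕ)*c1^(2:ℕ)*c2^(6:ℕ) + (-24)*w^(2:ℕ)*al^(2:ℕ)*c1^(3:ℕ)*c2) + ((48)*w^(2:ℕ)*al^(2:ℕ)*c1^(3:ℕ)*c2^(3:ℕ) + (-14)*w^(2:ℕ)*al^(2:ℕ)*c1^(3:ℕ)*c2^(5:ℕ))) + (((-4)*w^(2:ℕ)*al^(2:ℕ)*c1^(3:ℕ)*c2^(7:ℕ) + (-54)*w^(2:ℕ)*al^(2:ℕ)*c1^(4:ℕ)*c2^(2:ℕ)) + ((18)*w^(2:ℕ)*al^(2:ℕ)*c1^(4:ℕ)*c2^(4:ℕ) + ((6)*w^(2:ℕ)*al^(2:ℕ)*c1^(5:ℕ)*c2 + (-14)*w^(2:ℕ)*al^(2:ℕ)*c1^(5:ℕ)*c2^(3:ℕ)))))))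 + ((((((6)*w^(2:ℕ)*al^(2:ℕ)*c1^(5:ℕ)*c2^(5:ℕ) + (10)*w^(2:ℕ)*al^(2:ℕ)*c1^(6:ℕ)*c2^(2:ℕ)) + ((2)*w^(2:ℕ)*al^(2:ℕ)*c1^(7:ℕ)*c2^(3:ℕ) + (-20)*w^(3:ℕ)*al^(2:ℕ))) + (((40)*w^(3:ℕ)*al^(2:ℕ)*c2^(2:ℕ) + (-16)*w^(3:ℕ)*al^(2:ℕ)*c2^(4:ℕ)) + ((-75)*w^(3:ℕ)*al^(2:ℕ)*c1*c2 + ((102)*w^(3:ℕ)*al^(2:ℕ)*c1*c2^(3:ℕ) + (-12)*w^(3:ℕ)*al^(2:ℕ)*c1*c2^(5:ℕ))))) + ((((32)*w^(3:ℕ)*al^(2:ℕ)*c1^(2:ℕ) + (-104)*w^(3:ℕ)*al^(2:ℕ)*c1^(2:ℕ)*c2^(2:ℕ)) + ((66)*w^(3:ℕ)*al^(2:ℕ)*c1^(2:ℕ)*c2^(4:ℕ) + (8)*w^(3:ℕ)*al^(2:ℕ)*c1^(2:ℕ)*c2^(6:ℕ))) + (((84)*w^(3:ℕ)*al^(2:ℕ)*c1^(3:ℕ)*c2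 + (-50)*w^(3:ℕ)*al^(2:ℕ)*c1^(3:ℕ)*c2^(3:ℕ)) + ((-4)*w^(3:ℕ)*al^(2:ℕ)*c1^(3:ℕ)*c2^(5:ℕ) + ((-8)*w^(3:ℕ)*al^(2:ℕ)*c1^(4:ℕ) + (50)*w^(3:ℕ)*al^(2:ℕ)*c1^(4:ℕ)*c2^(2:ℕ)))))) + (((((-8)*w^(3:ℕ)*al^(2:ℕ)*c1^(4:ℕ)*c2^(4:ℕ) + (-18)*w^(3:ℕ)*al^(2:ℕ)*c1^(5:ℕ)*c2) + ((-8)*w^(3:ℕ)*al^(2:ℕ)*c1^(6:ℕ)*c2^(2:ℕ) + (80)*w^(4:ℕ)*al^(2:ℕ))) + (((-96)*w^(4:ℕ)*al^(2:ℕ)*c2^(2:ℕ) + (150)*w^(4:ℕ)*al^(2:ℕ)*c1*c2) + ((-114)*w^(4:ℕ)*al^(2:ℕ)*c1*c2^(3:ℕ) + ((-12)*w^(4:ℕ)*al^(2:ℕ)*c1*c2^(5:ℕ) + (-80)*w^(4:ℕ)*al^(2:ℕ)*c1^(2:ℕ))))) + ((((86)*w^(4:ℕ)*al^(2:ℕ)*c1^(2:ℕ)*c2^(2:ℕ)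 + (-10)*w^(4:ℕ)*al^(2:ℕ)*c1^(2:ℕ)*c2^(4:ℕ)) + ((-4)*w^(4:ℕ)*al^(2:ℕ)*c1^(2:ℕ)*c2^(6:ℕ) + (-102)*w^(4:ℕ)*al^(2:ℕ)*c1^(3:ℕ)*c2)) + (((23)*w^(4:ℕ)*al^(2:ℕ)*c1^(3:ℕ)*c2^(3:ℕ) + (4)*w^(4:ℕ)*al^(2:ℕ)*c1^(3:ℕ)*c2^(5:ℕ)) + ((16)*w^(4:ℕ)*al^(2:ℕ)*c1^(4:ℕ) + ((-14)*w^(4:ℕ)*al^(2:ℕ)*c1^(4:ℕ)*c2^(2:ℕ) + (2)*w^(4:ℕ)*al^(2:ℕ)*c1^(4:ℕ)*c2^(4:ℕ)))))))) + (((((((18)*w^(4:ℕ)*al^(2:ℕ)*c1^(5:ℕ)*c2 + (2)*w^(4:ℕ)*al^(2:ℕ)*c1^(5:ℕ)*c2^(3:ℕ)) + ((2)*w^(4:ℕ)*al^(2:ℕ)*c1^(6:ℕ)*c2^(2:ℕ) + (-120)*w^(5:ℕ)*al^(2:ℕ))) + (((56)*w^(5:ℕ)*al^(2:ℕ)*c2^(2:ℕ)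 + (16)*w^(5:ℕ)*al^(2:ℕ)*c2^(4:ℕ)) + ((-150)*w^(5:ℕ)*al^(2:ℕ)*c1*c2 + ((30)*w^(5:ℕ)*al^(2:ℕ)*c1*c2^(3:ℕ) + (12)*w^(5:ℕ)*al^(2:ℕ)*c1*c2^(5:ℕ))))) + ((((56)*w^(5:ℕ)*al^(2:ℕ)*c1^(2:ℕ) + (-38)*w^(5:ℕ)*al^(2:ℕ)*c1^(2:ℕ)*c2^(2:ℕ)) + ((-12)*w^(5:ℕ)*al^(2:ℕ)*c1^(2:ℕ)*c2^(4:ℕ) + (42)*w^(5:ℕ)*al^(2:ℕ)*c1^(3:ℕ)*c2)) + (((-6)*w^(5:ℕ)*al^(2:ℕ)*c1^(3:ℕ)*c2^(3:ℕ) + (-8)*w^(5:ℕ)*al^(2:ℕ)*c1^(4:ℕ)) + ((-4)*w^(5:ℕ)*al^(2:ℕ)*c1^(4:ℕ)*c2^(2:ℕ) + ((-6)*w^(5:ℕ)*al^(2:ℕ)*c1^(5:ℕ)*c2 + (80)*w^(6:ℕ)*al^(2:ℕ)))))) + (((((16)*w^(6:ℕ)*al^(2:ℕ)*c2^(2:ℕ)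 + (75)*w^(6:ℕ)*al^(2:ℕ)*c1*c2) + ((24)*w^(6:ℕ)*al^(2:ℕ)*c1*c2^(3:ℕ) + (5)*w^(6:ℕ)*al^(2:ℕ)*c1^(2:ℕ)*c2^(2:ℕ))) + (((4)*w^(6:ℕ)*al^(2:ℕ)*c1^(2:ℕ)*c2^(4:ℕ) + (6)*w^(6:ℕ)*al^(2:ℕ)*c1^(3:ℕ)*c2) + ((2)*w^(6:ℕ)*al^(2:ℕ)*c1^(4:ℕ)*c2^(2:ℕ) + ((-20)*w^(7:ℕ)*al^(2:ℕ) + (-16)*w^(7:ℕ)*al^(2:ℕ)*c2^(2:ℕ))))) + ((((-15)*w^(7:ℕ)*al^(2:ℕ)*c1*c2 + (-12)*w^(7:ℕ)*al^(2:ℕ)*c1*c2^(3:ℕ)) + ((-8)*w^(7:ℕ)*al^(2:ℕ)*c1^(2:ℕ) + (-6)*w^(7:ℕ)*al^(2:ℕ)*c1^(3:ℕ)*c2)) + (((5)*u*al^(3:ℕ)*c1^(2:ℕ)*c2^(2:ℕ) + (-10)*u*al^(3:ℕ)*c1^(2:ℕ)*c2^(4:ℕ)) + ((4)*u*al^(3:ℕ)*c1^(2:ℕ)*c2^(6:ℕ)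 + ((8)*u*al^(3:ℕ)*c1^(3:ℕ)*c2^(5:ℕ) + (-8)*u*al^(3:ℕ)*c1^(3:ℕ)*c2^(7:ℕ))))))) + ((((((-8)*u*al^(3:ℕ)*c1^(4:ℕ)*c2^(2:ℕ) + (6)*u*al^(3:ℕ)*c1^(4:ℕ)*c2^(4:ℕ)) + ((6)*u*al^(3:ℕ)*c1^(5:ℕ)*c2^(3:ℕ) + (20)*u*al^(3:ℕ)*c1^(5:ℕ)*c2^(5:ℕ))) + (((2)*u*al^(3:ℕ)*c1^(6:ℕ)*c2^(2:ℕ) + (-4)*u*al^(3:ℕ)*c1^(7:ℕ)*c2^(3:ℕ)) + ((-20)*u*w*al^(3:ℕ)*c1^(2:ℕ)*c2^(2:ℕ) + ((8)*u*w*al^(3:ℕ)*c1^(2:ℕ)*c2^(4:ℕ) + (16)*u*w*al^(3:ℕ)*c1^(2:ℕ)*c2^(6:ℕ))))) + ((((-24)*u*w*al^(3:ℕ)*c1^(3:ℕ)*c2^(5:ℕ) + (8)*u*w*al^(3:ℕ)*c1^(3:ℕ)*c2^(7:ℕ)) + ((8)*u*w*al^(3:ℕ)*c1^(4:ℕ)*c2^(2:ℕ)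 + (20)*u*w*al^(3:ℕ)*c1^(4:ℕ)*c2^(4:ℕ))) + (((-14)*u*w*al^(3:ℕ)*c1^(5:ℕ)*c2^(3:ℕ) + (8)*u*w*al^(3:ℕ)*c1^(5:ℕ)*c2^(5:ℕ)) + ((4)*u*w*al^(3:ℕ)*c1^(6:ℕ)*c2^(2:ℕ) + ((4)*u*w*al^(3:ℕ)*c1^(7:ℕ)*c2^(3:ℕ) + (24)*u*w^(2:ℕ)*al^(3:ℕ)*c1*c2^(3:ℕ)))))) + (((((-24)*u*w^(2:ℕ)*al^(3:ℕ)*c1*c2^(5:ℕ) + (30)*u*w^(2:ℕ)*al^(3:ℕ)*c1^(2:ℕ)*c2^(2:ℕ)) + ((42)*u*w^(2:ℕ)*al^(3:ℕ)*c1^(2:ℕ)*c2^(4:ℕ) + (-28)*u*w^(2:ℕ)*al^(3:ℕ)*c1^(2:ℕ)*c2^(6:ℕ))) + (((18)*u*w^(2:ℕ)*al^(3:ℕ)*c1^(3:ℕ)*c2 + (-36)*u*w^(2:ℕ)*al^(3:ℕ)*c1^(3:ℕ)*c2^(3:ℕ)) + ((28)*u*w^(2:ℕ)*al^(3:ℕ)*c1^(3:ℕ)*c2^(5:ℕ)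 + ((20)*u*w^(2:ℕ)*al^(3:ℕ)*c1^(4:ℕ)*c2^(2:ℕ) + (-26)*u*w^(2:ℕ)*al^(3:ℕ)*c1^(4:ℕ)*c2^(4:ℕ))))) + ((((-12)*u*w^(2:ℕ)*al^(3:ℕ)*c1^(5:ℕ)*c2 + (6)*u*w^(2:ℕ)*al^(3:ℕ)*c1^(5:ℕ)*c2^(3:ℕ)) + ((-4)*u*w^(2:ℕ)*al^(3:ℕ)*c1^(5:ℕ)*c2^(5:ℕ) + (-10)*u*w^(2:ℕ)*al^(3:ℕ)*c1^(6:ℕ)*c2^(2:ℕ))) + (((-32)*u*w^(3:ℕ)*al^(3:ℕ)*c2^(2:ℕ) + (32)*u*w^(3:ℕ)*al^(3:ℕ)*c2^(4:ℕ)) + ((-96)*u*w^(3:ℕ)*al^(3:ℕ)*c1*c2^(3:ℕ) + ((48)*u*w^(3:ℕ)*al^(3:ℕ)*c1*c2^(5:ℕ) + (-24)*u*w^(3:ℕ)*al^(3:ℕ)*c1^(2:ℕ))))))))) + ((((((((28)*u*w^(3:ℕ)*al^(3:ℕ)*c1^(2:ℕ)*c2^(2:ℕ) + (-84)*u*w^(3:ℕ)*al^(3:ℕ)*c1^(2:ℕ)*c2^(4:ℕ))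 + ((8)*u*w^(3:ℕ)*al^(3:ℕ)*c1^(2:ℕ)*c2^(6:ℕ) + (-60)*u*w^(3:ℕ)*al^(3:ℕ)*c1^(3:ℕ)*c2)) + (((60)*u*w^(3:ℕ)*al^(3:ℕ)*c1^(3:ℕ)*c2^(3:ℕ) + (-12)*u*w^(3:ℕ)*al^(3:ℕ)*c1^(3:ℕ)*c2^(5:ℕ)) + ((16)*u*w^(3:ℕ)*al^(3:ℕ)*c1^(4:ℕ) + ((-26)*u*w^(3:ℕ)*al^(3:ℕ)*c1^(4:ℕ)*c2^(2:ℕ) + (16)*u*w^(3:ℕ)*al^(3:ℕ)*c1^(4:ℕ)*c2^(4:ℕ))))) + ((((24)*u*w^(3:ℕ)*al^(3:ℕ)*c1^(5:ℕ)*c2 + (2)*u*w^(3:ℕ)*al^(3:ℕ)*c1^(5:ℕ)*c2^(3:ℕ)) + ((4)*u*w^(3:ℕ)*al^(3:ℕ)*c1^(6:ℕ)*c2^(2:ℕ) + (96)*u*w^(4:ℕ)*al^(3:ℕ)*c2^(2:ℕ))) + (((-32)*u*w^(4:ℕ)*al^(3:ℕ)*c2^(4:ℕ) + (156)*u*w^(4:ℕ)*al^(3:ℕ)*c1*c2^(3:ℕ))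 + ((-24)*u*w^(4:ℕ)*al^(3:ℕ)*c1*c2^(5:ℕ) + ((56)*u*w^(4:ℕ)*al^(3:ℕ)*c1^(2:ℕ) + (-27)*u*w^(4:ℕ)*al^(3:ℕ)*c1^(2:ℕ)*c2^(2:ℕ)))))) + (((((56)*u*w^(4:ℕ)*al^(3:ℕ)*c1^(2:ℕ)*c2^(4:ℕ) + (60)*u*w^(4:ℕ)*al^(3:ℕ)*c1^(3:ℕ)*c2) + ((-36)*u*w^(4:ℕ)*al^(3:ℕ)*c1^(3:ℕ)*c2^(3:ℕ) + (-16)*u*w^(4:ℕ)*al^(3:ℕ)*c1^(4:ℕ))) + (((4)*u*w^(4:ℕ)*al^(3:ℕ)*c1^(4:ℕ)*c2^(2:ℕ) + (-4)*u*w^(4:ℕ)*al^(3:ℕ)*c1^(4:ℕ)*c2^(4:ℕ)) + ((-12)*u*w^(4:ℕ)*al^(3:ℕ)*c1^(5:ℕ)*c2 + ((-112)*u*w^(5:ℕ)*al^(3:ℕ)*c2^(2:ℕ) + (-120)*u*w^(5:ℕ)*al^(3:ℕ)*c1*c2^(3:ℕ))))) + ((((-24)*u*w^(5:ℕ)*al^(3:ℕ)*c1^(2:ℕ)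 + (16)*u*w^(5:ℕ)*al^(3:ℕ)*c1^(2:ℕ)*c2^(2:ℕ)) + ((-12)*u*w^(5:ℕ)*al^(3:ℕ)*c1^(2:ℕ)*c2^(4:ℕ) + (-12)*u*w^(5:ℕ)*al^(3:ℕ)*c1^(3:ℕ)*c2)) + (((12)*u*w^(5:ℕ)*al^(3:ℕ)*c1^(3:ℕ)*c2^(3:ℕ) + (2)*u*w^(5:ℕ)*al^(3:ℕ)*c1^(4:ℕ)*c2^(2:ℕ)) + ((48)*u*w^(6:ℕ)*al^(3:ℕ)*c2^(2:ℕ) + ((36)*u*w^(6:ℕ)*al^(3:ℕ)*c1*c2^(3:ℕ) + (-8)*u*w^(6:ℕ)*al^(3:ℕ)*c1^(2:ℕ))))))) + ((((((-6)*u*w^(6:ℕ)*al^(3:ℕ)*c1^(3:ℕ)*c2 + (8)*u^(2:ℕ)*al^(4:ℕ)*c1^(2:ℕ)*c2^(4:ℕ)) + ((-8)*u^(2:ℕ)*al^(4:ℕ)*c1^(2:ℕ)*c2^(6:ℕ) + (-4)*u^(2:ℕ)*al^(4:ℕ)*c1^(3:ℕ)*c2^(3:ℕ))) + (((8)*u^(2:ℕ)*al^(4:ℕ)*c1^(3:ℕ)*c2^(5:ℕ)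 + (6)*u^(2:ℕ)*al^(4:ℕ)*c1^(4:ℕ)*c2^(2:ℕ)) + ((-12)*u^(2:ℕ)*al^(4:ℕ)*c1^(4:ℕ)*c2^(4:ℕ) + ((6)*u^(2:ℕ)*al^(4:ℕ)*c1^(5:ℕ)*c2^(3:ℕ) + (-16)*u^(2:ℕ)*al^(4:ℕ)*c1^(5:ℕ)*c2^(5:ℕ))))) + ((((-4)*u^(2:ℕ)*al^(4:ℕ)*c1^(6:ℕ)*c2^(2:ℕ) + (-1)*u^(2:ℕ)*al^(4:ℕ)*c1^(7:ℕ)*c2^(3:ℕ)) + ((8)*u^(2:ℕ)*w*al^(4:ℕ)*c1^(2:ℕ)*c2^(2:ℕ) + (-40)*u^(2:ℕ)*w*al^(4:ℕ)*c1^(2:ℕ)*c2^(4:ℕ))) + (((8)*u^(2:ℕ)*w*al^(4:ℕ)*c1^(2:ℕ)*c2^(6:ℕ) + (8)*u^(2:ℕ)*w*al^(4:ℕ)*c1^(3:ℕ)*c2^(3:ℕ)) + ((-16)*u^(2:ℕ)*w*al^(4:ℕ)*c1^(3:ℕ)*c2^(5:ℕ) + ((-26)*u^(2:ℕ)*w*al^(4:ℕ)*c1^(4:ℕ)*c2^(2:ℕ)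 + (8)*u^(2:ℕ)*w*al^(4:ℕ)*c1^(4:ℕ)*c2^(4:ℕ)))))) + (((((-4)*u^(2:ℕ)*w*al^(4:ℕ)*c1^(5:ℕ)*c2^(3:ℕ) + (8)*u^(2:ℕ)*w*al^(4:ℕ)*c1^(5:ℕ)*c2^(5:ℕ)) + ((6)*u^(2:ℕ)*w*al^(4:ℕ)*c1^(6:ℕ)*c2^(2:ℕ) + (2)*u^(2:ℕ)*w*al^(4:ℕ)*c1^(7:ℕ)*c2^(3:ℕ))) + (((-12)*u^(2:ℕ)*w^(2:ℕ)*al^(4:ℕ)*c1*c2 + (24)*u^(2:ℕ)*w^(2:ℕ)*al^(4:ℕ)*c1*c2^(3:ℕ)) + ((-20)*u^(2:ℕ)*w^(2:ℕ)*al^(4:ℕ)*c1^(2:ℕ)*c2^(2:ℕ) + ((68)*u^(2:ℕ)*w^(2:ℕ)*al^(4:ℕ)*c1^(2:ℕ)*c2^(4:ℕ) + (18)*u^(2:ℕ)*w^(2:ℕ)*al^(4:ℕ)*c1^(3:ℕ)*c2)))) + ((((-4)*u^(2:ℕ)*w^(2:ℕ)*al^(4:ℕ)*c1^(3:ℕ)*c2^(3:ℕ)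 + (8)*u^(2:ℕ)*w^(2:ℕ)*al^(4:ℕ)*c1^(3:ℕ)*c2^(5:ℕ)) + ((20)*u^(2:ℕ)*w^(2:ℕ)*al^(4:ℕ)*c1^(4:ℕ)*c2^(2:ℕ) + (-20)*u^(2:ℕ)*w^(2:ℕ)*al^(4:ℕ)*c1^(4:ℕ)*c2^(4:ℕ))) + (((-3)*u^(2:ℕ)*w^(2:ℕ)*al^(4:ℕ)*c1^(5:ℕ)*c2 + (-2)*u^(2:ℕ)*w^(2:ℕ)*al^(4:ℕ)*c1^(5:ℕ)*c2^(3:ℕ)) + ((-4)*u^(2:ℕ)*w^(2:ℕ)*al^(4:ℕ)*c1^(5:ℕ)*c2^(5:ℕ) + ((-5)*u^(2:ℕ)*w^(2:ℕ)*al^(4:ℕ)*c1^(6:ℕ)*c2^(2:ℕ) + (-1)*u^(2:ℕ)*w^(2:ℕ)*al^(4:ℕ)*c1^(7:ℕ)*c2^(3:ℕ)))))))) + (((((((16)*u^(2:ℕ)*w^(3:ℕ)*al^(4:ℕ) + (-32)*u^(2:ℕ)*w^(3:ℕ)*al^(4:ℕ)*c2^(2:ℕ)) + ((36)*u^(2:ℕ)*w^(3:ℕ)*al^(4:ℕ)*c1*c2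 + (-72)*u^(2:ℕ)*w^(3:ℕ)*al^(4:ℕ)*c1*c2^(3:ℕ))) + (((-24)*u^(2:ℕ)*w^(3:ℕ)*al^(4:ℕ)*c1^(2:ℕ) + (16)*u^(2:ℕ)*w^(3:ℕ)*al^(4:ℕ)*c1^(2:ℕ)*c2^(2:ℕ)) + ((-44)*u^(2:ℕ)*w^(3:ℕ)*al^(4:ℕ)*c1^(2:ℕ)*c2^(4:ℕ) + ((-30)*u^(2:ℕ)*w^(3:ℕ)*al^(4:ℕ)*c1^(3:ℕ)*c2 + (24)*u^(2:ℕ)*w^(3:ℕ)*al^(4:ℕ)*c1^(3:ℕ)*c2^(3:ℕ))))) + ((((4)*u^(2:ℕ)*w^(3:ℕ)*al^(4:ℕ)*c1^(4:ℕ) + (2)*u^(2:ℕ)*w^(3:ℕ)*al^(4:ℕ)*c1^(4:ℕ)*c2^(2:ℕ)) + ((16)*u^(2:ℕ)*w^(3:ℕ)*al^(4:ℕ)*c1^(4:ℕ)*c2^(4:ℕ) + (9)*u^(2:ℕ)*w^(3:ℕ)*al^(4:ℕ)*c1^(5:ℕ)*c2)) + (((4)*u^(2:ℕ)*w^(3:ℕ)*al^(4:ℕ)*c1^(6:ℕ)*c2^(2:ℕ)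 + (-32)*u^(2:ℕ)*w^(4:ℕ)*al^(4:ℕ)) + ((64)*u^(2:ℕ)*w^(4:ℕ)*al^(4:ℕ)*c2^(2:ℕ) + ((-36)*u^(2:ℕ)*w^(4:ℕ)*al^(4:ℕ)*c1*c2 + (72)*u^(2:ℕ)*w^(4:ℕ)*al^(4:ℕ)*c1*c2^(3:ℕ)))))) + (((((16)*u^(2:ℕ)*w^(4:ℕ)*al^(4:ℕ)*c1^(2:ℕ) + (-36)*u^(2:ℕ)*w^(4:ℕ)*al^(4:ℕ)*c1^(2:ℕ)*c2^(2:ℕ)) + ((8)*u^(2:ℕ)*w^(4:ℕ)*al^(4:ℕ)*c1^(2:ℕ)*c2^(4:ℕ) + (6)*u^(2:ℕ)*w^(4:ℕ)*al^(4:ℕ)*c1^(3:ℕ)*c2)) + (((-36)*u^(2:ℕ)*w^(4:ℕ)*al^(4:ℕ)*c1^(3:ℕ)*c2^(3:ℕ) + (-8)*u^(2:ℕ)*w^(4:ℕ)*al^(4:ℕ)*c1^(4:ℕ)) + ((-2)*u^(2:ℕ)*w^(4:ℕ)*al^(4:ℕ)*c1^(4:ℕ)*c2^(2:ℕ) + ((-4)*u^(2:ℕ)*w^(4:ℕ)*al^(4:ℕ)*c1^(4:ℕ)*c2^(4:ℕ)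 + (-9)*u^(2:ℕ)*w^(4:ℕ)*al^(4:ℕ)*c1^(5:ℕ)*c2)))) + ((((-1)*u^(2:ℕ)*w^(4:ℕ)*al^(4:ℕ)*c1^(6:ℕ)*c2^(2:ℕ) + (16)*u^(2:ℕ)*w^(5:ℕ)*al^(4:ℕ)) + ((-32)*u^(2:ℕ)*w^(5:ℕ)*al^(4:ℕ)*c2^(2:ℕ) + (12)*u^(2:ℕ)*w^(5:ℕ)*al^(4:ℕ)*c1*c2)) + (((-24)*u^(2:ℕ)*w^(5:ℕ)*al^(4:ℕ)*c1*c2^(3:ℕ) + (8)*u^(2:ℕ)*w^(5:ℕ)*al^(4:ℕ)*c1^(2:ℕ)) + ((16)*u^(2:ℕ)*w^(5:ℕ)*al^(4:ℕ)*c1^(2:ℕ)*c2^(2:ℕ) + ((6)*u^(2:ℕ)*w^(5:ℕ)*al^(4:ℕ)*c1^(3:ℕ)*c2 + (12)*u^(2:ℕ)*w^(5:ℕ)*al^(4:ℕ)*c1^(3:ℕ)*c2^(3:ℕ))))))) + ((((((4)*u^(2:ℕ)*w^(5:ℕ)*al^(4:ℕ)*c1^(4:ℕ) + (3)*u^(2:ℕ)*w^(5:ℕ)*al^(4:ℕ)*c1^(5:ℕ)*c2)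 + ((-4)*u^(3:ℕ)*al^(5:ℕ)*c1^(2:ℕ)*c2^(2:ℕ) + (8)*u^(3:ℕ)*al^(5:ℕ)*c1^(2:ℕ)*c2^(4:ℕ))) + (((6)*u^(3:ℕ)*al^(5:ℕ)*c1^(4:ℕ)*c2^(2:ℕ) + (-4)*u^(3:ℕ)*al^(5:ℕ)*c1^(5:ℕ)*c2^(3:ℕ)) + ((-1)*u^(3:ℕ)*al^(5:ℕ)*c1^(6:ℕ)*c2^(2:ℕ) + ((2)*u^(3:ℕ)*al^(5:ℕ)*c1^(7:ℕ)*c2^(3:ℕ) + (8)*u^(3:ℕ)*w*al^(5:ℕ)*c1^(2:ℕ)*c2^(2:ℕ))))) + ((((-16)*u^(3:ℕ)*w*al^(5:ℕ)*c1^(2:ℕ)*c2^(4:ℕ) + (4)*u^(3:ℕ)*w*al^(5:ℕ)*c1^(4:ℕ)*c2^(2:ℕ)) + ((8)*u^(3:ℕ)*w*al^(5:ℕ)*c1^(4:ℕ)*c2^(4:ℕ) + (4)*u^(3:ℕ)*w*al^(5:ℕ)*c1^(5:ℕ)*c2^(3:ℕ))) + (((-2)*u^(3:ℕ)*w*al^(5:ℕ)*c1^(6:ℕ)*c2^(2:ℕ)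 + (-2)*u^(3:ℕ)*w*al^(5:ℕ)*c1^(7:ℕ)*c2^(3:ℕ)) + ((-4)*u^(3:ℕ)*w^(2:ℕ)*al^(5:ℕ)*c1^(2:ℕ)*c2^(2:ℕ) + ((8)*u^(3:ℕ)*w^(2:ℕ)*al^(5:ℕ)*c1^(2:ℕ)*c2^(4:ℕ) + (-12)*u^(3:ℕ)*w^(2:ℕ)*al^(5:ℕ)*c1^(3:ℕ)*c2))))) + (((((-14)*u^(3:ℕ)*w^(2:ℕ)*al^(5:ℕ)*c1^(4:ℕ)*c2^(2:ℕ) + (-4)*u^(3:ℕ)*w^(2:ℕ)*al^(5:ℕ)*c1^(4:ℕ)*c2^(4:ℕ)) + ((6)*u^(3:ℕ)*w^(2:ℕ)*al^(5:ℕ)*c1^(5:ℕ)*c2 + (5)*u^(3:ℕ)*w^(2:ℕ)*al^(5:ℕ)*c1^(6:ℕ)*c2^(2:ℕ))) + (((16)*u^(3:ℕ)*w^(3:ℕ)*al^(5:ℕ)*c1^(2:ℕ) + (24)*u^(3:ℕ)*w^(3:ℕ)*al^(5:ℕ)*c1^(3:ℕ)*c2) + ((-8)*u^(3:ℕ)*w^(3:ℕ)*al^(5:ℕ)*c1^(4:ℕ)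 + ((4)*u^(3:ℕ)*w^(3:ℕ)*al^(5:ℕ)*c1^(4:ℕ)*c2^(2:ℕ) + (-12)*u^(3:ℕ)*w^(3:ℕ)*al^(5:ℕ)*c1^(5:ℕ)*c2)))) + ((((-2)*u^(3:ℕ)*w^(3:ℕ)*al^(5:ℕ)*c1^(6:ℕ)*c2^(2:ℕ) + (-16)*u^(3:ℕ)*w^(4:ℕ)*al^(5:ℕ)*c1^(2:ℕ)) + ((-12)*u^(3:ℕ)*w^(4:ℕ)*al^(5:ℕ)*c1^(3:ℕ)*c2 + (8)*u^(3:ℕ)*w^(4:ℕ)*al^(5:ℕ)*c1^(4:ℕ))) + (((6)*u^(3:ℕ)*w^(4:ℕ)*al^(5:ℕ)*c1^(5:ℕ)*c2 + (-4)*u^(4:ℕ)*al^(6:ℕ)*c1^(4:ℕ)*c2^(2:ℕ)) + ((2)*u^(4:ℕ)*al^(6:ℕ)*c1^(6:ℕ)*c2^(2:ℕ) + ((4)*u^(4:ℕ)*w*al^(6:ℕ)*c1^(4:ℕ)*c2^(2:ℕ) + (-2)*u^(4:ℕ)*w*al^(6:ℕ)*c1^(6:ℕ)*c2^(2:ℕ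))))))))))
noncomputable def polyB (al c1 c2 u w : ℝ) : ℝ := (((((((6)*al*c1^(2:ℕ)*c2^(2:ℕ) + (-4)*al*c1^(2:ℕ)*c2^(4:ℕ)) + ((-2)*al*c1^(2:ℕ)*c2^(6:ℕ) + (10)*al*c1^(3:ℕ)*c2^(5:ℕ))) + (((-6)*al*c1^(3:ℕ)*c2^(7:ℕ) + (-4)*al*c1^(4:ℕ)*c2^(2:ℕ)) + ((-4)*al*c1^(4:ℕ)*c2^(4:ℕ) + ((6)*al*c1^(5:ℕ)*c2^(3:ℕ) + (8)*al*c1^(5:ℕ)*c2^(5:ℕ))))) + ((((-2)*al*c1^(6:ℕ)*c2^(2:ℕ) + (-2)*al*c1^(7:ℕ)*c2^(3:ℕ)) + ((-6)*w*al*c1*c2^(3:ℕ) + ((6)*w*al*c1*c2^(5:ℕ) + (-15)*w*al*c1^(2:ℕ)*c2^(2:ℕ)))) + (((-10)*w*al*c1^(2:ℕ)*c2^(4:ℕ) + (13)*w*al*c1^(2:ℕ)*c2^(6:ℕ)) + ((-6)*w*al*c1^(3:ℕ)*c2 + ((12)*w*al*c1^(3:ℕ)*c2^(3:ℕ) + (-18)*w*al*c1^(3:ℕ)*c2^(5:ℕ))))))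 + (((((4)*w*al*c1^(3:ℕ)*c2^(7:ℕ) + (-2)*w*al*c1^(4:ℕ)*c2^(2:ℕ)) + ((18)*w*al*c1^(4:ℕ)*c2^(4:ℕ) + (6)*w*al*c1^(5:ℕ)*c2)) + (((-6)*w*al*c1^(5:ℕ)*c2^(3:ℕ) + (-4)*w*al*c1^(5:ℕ)*c2^(5:ℕ)) + ((5)*w*al*c1^(6:ℕ)*c2^(2:ℕ) + ((8)*w^(2:ℕ)*al*c2^(2:ℕ) + (-8)*w^(2:ℕ)*al*c2^(4:ℕ))))) + ((((36)*w^(2:ℕ)*al*c1*c2^(3:ℕ) + (-24)*w^(2:ℕ)*al*c1*c2^(5:ℕ)) + ((8)*w^(2:ℕ)*al*c1^(2:ℕ) + ((4)*w^(2:ℕ)*al*c1^(2:ℕ)*c2^(2:ℕ) + (38)*w^(2:ℕ)*al*c1^(2:ℕ)*c2^(4:ℕ)))) + (((-14)*w^(2:ℕ)*al*c1^(2:ℕ)*c2^(6:ℕ) + (24)*w^(2:ℕ)*al*c1^(3:ℕ)*c2) + ((-36)*w^(2:ℕ)*al*c1^(3:ℕ)*c2^(3:ℕ) + ((14)*w^(2:ℕ)*al*c1^(3:ℕ)*c2^(5:ℕ)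 + (-8)*w^(2:ℕ)*al*c1^(4:ℕ))))))) + ((((((10)*w^(2:ℕ)*al*c1^(4:ℕ)*c2^(2:ℕ) + (-16)*w^(2:ℕ)*al*c1^(4:ℕ)*c2^(4:ℕ)) + ((-12)*w^(2:ℕ)*al*c1^(5:ℕ)*c2 + (2)*w^(2:ℕ)*al*c1^(5:ℕ)*c2^(3:ℕ))) + (((-2)*w^(2:ℕ)*al*c1^(6:ℕ)*c2^(2:ℕ) + (-40)*w^(3:ℕ)*al*c2^(2:ℕ)) + ((24)*w^(3:ℕ)*al*c2^(4:ℕ) + ((-84)*w^(3:ℕ)*al*c1*c2^(3:ℕ) + (30)*w^(3:ℕ)*al*c1*c2^(5:ℕ))))) + ((((-24)*w^(3:ℕ)*al*c1^(2:ℕ) + (17)*w^(3:ℕ)*al*c1^(2:ℕ)*c2^(2:ℕ)) + ((-44)*w^(3:ℕ)*al*c1^(2:ℕ)*c2^(4:ℕ) + ((4)*w^(3:ℕ)*al*c1^(2:ℕ)*c2^(6:ℕ) + (-36)*w^(3:ℕ)*al*c1^(3:ℕ)*c2))) + (((36)*w^(3:ℕ)*al*c1^(3:ℕ)*c2^(3:ℕ)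 + (-4)*w^(3:ℕ)*al*c1^(3:ℕ)*c2^(5:ℕ)) + ((8)*w^(3:ℕ)*al*c1^(4:ℕ) + ((-8)*w^(3:ℕ)*al*c1^(4:ℕ)*c2^(2:ℕ) + (4)*w^(3:ℕ)*al*c1^(4:ℕ)*c2^(4:ℕ)))))) + (((((6)*w^(3:ℕ)*al*c1^(5:ℕ)*c2 + (72)*w^(4:ℕ)*al*c2^(2:ℕ)) + ((-16)*w^(4:ℕ)*al*c2^(4:ℕ) + (96)*w^(4:ℕ)*al*c1*c2^(3:ℕ))) + (((-12)*w^(4:ℕ)*al*c1*c2^(5:ℕ) + (24)*w^(4:ℕ)*al*c1^(2:ℕ)) + ((-10)*w^(4:ℕ)*al*c1^(2:ℕ)*c2^(2:ℕ) + ((22)*w^(4:ℕ)*al*c1^(2:ℕ)*c2^(4:ℕ) + (24)*w^(4:ℕ)*al*c1^(3:ℕ)*c2)))) + ((((-12)*w^(4:ℕ)*al*c1^(3:ℕ)*c2^(3:ℕ) + (2)*w^(4:ℕ)*al*c1^(4:ℕ)*c2^(2:ℕ)) + ((-56)*w^(5:ℕ)*al*c2^(2:ℕ) + ((-54)*w^(5:ℕ)*al*c1*c2^(3:ℕ)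 + (-8)*w^(5:ℕ)*al*c1^(2:ℕ)))) + (((-1)*w^(5:ℕ)*al*c1^(2:ℕ)*c2^(2:ℕ) + (-4)*w^(5:ℕ)*al*c1^(2:ℕ)*c2^(4:ℕ)) + ((-6)*w^(5:ℕ)*al*c1^(3:ℕ)*c2 + ((16)*w^(6:ℕ)*al*c2^(2:ℕ) + (12)*w^(6:ℕ)*al*c1*c2^(3:ℕ))))))))
noncomputable def polyC (al c1 c2 u w : ℝ) : ℝ := ((((((-24) + ((32)*c2^(2:ℕ) + (-8)*c2^(4:ℕ))) + ((-63)*c1*c2 + ((60)*c1*c2^(3:ℕ) + (-9)*c1*c2^(5:ℕ)))) + (((32)*c1^(2:ℕ) + ((-71)*c1^(2:ℕ)*c2^(2:ℕ) + (28)*c1^(2:ℕ)*c2^(4:ℕ))) + (((-1)*c1^(2:ℕ)*c2^(6:ℕ) + (60)*c1^(3:ℕ)*c2) + ((-33)*c1^(3:ℕ)*c2^(3:ℕ) + (2)*c1^(3:ℕ)*c2^(5:ℕ))))) + ((((-8)*c1^(4:ℕ) + ((28)*c1^(4:ℕ)*c2^(2:ℕ) + (-2)*c1^(4:ℕ)*c2^(4:ℕ)))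 + (((-9)*c1^(5:ℕ)*c2 + (2)*c1^(5:ℕ)*c2^(3:ℕ)) + ((-1)*c1^(6:ℕ)*c2^(2:ℕ) + (60)*w))) + (((-48)*w*c2^(2:ℕ) + ((4)*w*c2^(4:ℕ) + (105)*w*c1*c2)) + (((-60)*w*c1*c2^(3:ℕ) + (3)*w*c1*c2^(5:ℕ)) + ((-48)*w*c1^(2:ℕ) + (58)*w*c1^(2:ℕ)*c2^(2:ℕ)))))) + (((((-12)*w*c1^(2:ℕ)*c2^(4:ℕ) + ((-60)*w*c1^(3:ℕ)*c2 + (12)*w*c1^(3:ℕ)*c2^(3:ℕ))) + (((4)*w*c1^(4:ℕ) + (-12)*w*c1^(4:ℕ)*c2^(2:ℕ)) + ((3)*w*c1^(5:ℕ)*c2 + (-80)*w^(2:ℕ)))) + (((32)*w^(2:ℕ)*c2^(2:ℕ) + ((-105)*w^(2:ℕ)*c1*c2 + (30)*w^(2:ℕ)*c1*c2^(3:ℕ))) + (((32)*w^(2:ℕ)*c1^(2:ℕ) + (-27)*w^(2:ℕ)*c1^(2:ℕ)*c2^(2:ℕ)) + ((2)*w^(2:ℕ)*c1^(2:ℕ)*c2^(4:ℕ)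 + (30)*w^(2:ℕ)*c1^(3:ℕ)*c2)))) + ((((-1)*w^(2:ℕ)*c1^(3:ℕ)*c2^(3:ℕ) + ((2)*w^(2:ℕ)*c1^(4:ℕ)*c2^(2:ℕ) + (60)*w^(3:ℕ))) + (((-8)*w^(3:ℕ)*c2^(2:ℕ) + (63)*w^(3:ℕ)*c1*c2) + ((-6)*w^(3:ℕ)*c1*c2^(3:ℕ) + (-8)*w^(3:ℕ)*c1^(2:ℕ)))) + (((8)*w^(3:ℕ)*c1^(2:ℕ)*c2^(2:ℕ) + ((-6)*w^(3:ℕ)*c1^(3:ℕ)*c2 + (-24)*w^(4:ℕ))) + (((-21)*w^(4:ℕ)*c1*c2 + (-1)*w^(4:ℕ)*c1^(2:ℕ)*c2^(2:ℕ)) + ((4)*w^(5:ℕ) + (3)*w^(5:ℕ)*c1*c2))))))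
noncomputable def polyD (al c1 c2 u w : ℝ) : ℝ := ((((((1)*c1^(3:ℕ)*c2^(3:ℕ) + (-1)*c1^(3:ℕ)*c2^(5:ℕ)) + ((-2)*c1^(4:ℕ)*c2^(4:ℕ) + (-1)*c1^(5:ℕ)*c2^(3:ℕ))) + (((-2)*w*c1^(2:ℕ)*c2^(2:ℕ) + (2)*w*c1^(2:ℕ)*c2^(4:ℕ)) + ((-2)*w*c1^(3:ℕ)*c2^(3:ℕ) + ((2)*w*c1^(3:ℕ)*c2^(5:ℕ) + (2)*w*c1^(4:ℕ)*c2^(2:ℕ))))) + ((((4)*w*c1^(4:ℕ)*c2^(4:ℕ) + (2)*w*c1^(5:ℕ)*c2^(3:ℕ)) + ((3)*w^(2:ℕ)*c1*c2 + (-3)*w^(2:ℕ)*c1*c2^(3:ℕ))) + (((7)*w^(2:ℕ)*c1^(2:ℕ)*c2^(2:ℕ) + (-5)*w^(2:ℕ)*c1^(2:ℕ)*c2^(4:ℕ)) + ((-3)*w^(2:ℕ)*c1^(3:ℕ)*c2 + ((1)*w^(2:ℕ)*c1^(3:ℕ)*c2^(3:ℕ) + (-1)*w^(2:ℕ)*c1^(3:ℕ)*c2^(5:ℕ))))))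 + (((((-5)*w^(2:ℕ)*c1^(4:ℕ)*c2^(2:ℕ) + (-2)*w^(2:ℕ)*c1^(4:ℕ)*c2^(4:ℕ)) + ((-1)*w^(2:ℕ)*c1^(5:ℕ)*c2^(3:ℕ) + (-4)*w^(3:ℕ))) + (((4)*w^(3:ℕ)*c2^(2:ℕ) + (-13)*w^(3:ℕ)*c1*c2) + ((9)*w^(3:ℕ)*c1*c2^(3:ℕ) + ((4)*w^(3:ℕ)*c1^(2:ℕ) + (-10)*w^(3:ℕ)*c1^(2:ℕ)*c2^(2:ℕ))))) + ((((4)*w^(3:ℕ)*c1^(2:ℕ)*c2^(4:ℕ) + (9)*w^(3:ℕ)*c1^(3:ℕ)*c2) + ((4)*w^(3:ℕ)*c1^(4:ℕ)*c2^(2:ℕ) + ((1)*u*al*c1^(2:ℕ)*c2^(2:ℕ) + (-1)*u*al*c1^(2:ℕ)*c2^(4:ℕ)))) + (((-2)*u*al*c1^(3:ℕ)*c2^(3:ℕ) + (2)*u*al*c1^(3:ℕ)*c2^(5:ℕ)) + ((-1)*u*al*c1^(4:ℕ)*c2^(2:ℕ) + ((4)*u*al*c1^(4:ℕ)*c2^(4:ℕ)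 + (2)*u*al*c1^(5:ℕ)*c2^(3:ℕ)))))))
noncomputable def Xpoly (c1 c2 w a1 a2 : ℝ) : ℝ :=
  (a2-w)*c2^(2:ℕ) - (1-w)*(a1-w)*(a2-w) + c1^(2:ℕ)*a1^(2:ℕ)*(1-w)
noncomputable def Xppoly (c1 c2 w am1 am2 : ℝ) : ℝ :=
  (1-w)*am2^(2:ℕ)*c2^(2:ℕ) - (am2-w)*(am1-w)*(1-w) + c1^(2:ℕ)*am1^(2:ℕ)*(am2-w)
noncomputable def Ppoly (al c1 c2 u w : ℝ) : ℝ :=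
  -2*(c1*c2)^(2:ℕ)*w + (c1*c2)*(3+c1*c2)*w^(2:ℕ) + al*(c1*c2)^(2:ℕ)*u - (3*(c1*c2)+4)*w^(3:ℕ)
noncomputable def Npoly (al c1 c2 u w r1 r2 rm1 rm2 : ℝ) : ℝ :=
  4*(c1*c2)^(5:ℕ)*(((1+2*al*u+r2)-w)*((1-2*al*u+rm2)-w)*(1-al*u+rm1)^(2:ℕ))
  - ((c1*c2)^(3:ℕ) + Ppoly al c1 c2 u w)
    * Xpoly c1 c2 w (1+al*u+r1) (1+2*al*u+r2)
    * Xppoly c1 c2 w (1-al*u+rm1) (1-2*al*u+rm2)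
noncomputable def Kfun1 (al c1 c2 u w r1 r2 rm1 rm2 : ℝ) : ℝ :=
  -(((c1*c2)^(3:ℕ) + Ppoly al c1 c2 u w)
    * (-((1-w)*((1+2*al*u+r2)-w)) + c1^(2:ℕ)*((1+al*u+r1)+(1+al*u))*(1-w))
    * Xppoly c1 c2 w (1-al*u+rm1) (1-2*al*u+rm2))
noncomputable def Kfun2 (al c1 c2 u w r1 r2 rm1 rm2 : ℝ) : ℝ :=
  4*(c1*c2)^(5:ℕ)*(((1-2*al*u+rm2)-w)*(1-al*u+rm1)^(2:ℕ))
  - ((c1*c2)^(3:ℕ) + Ppoly al c1 c2 u w)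
    * (c2^(2:ℕ) - (1-w)*((1+al*u)-w))
    * Xppoly c1 c2 w (1-al*u+rm1) (1-2*al*u+rm2)
noncomputable def Kfun3 (al c1 c2 u w r1 r2 rm1 rm2 : ℝ) : ℝ :=
  4*(c1*c2)^(5:ℕ)*(((1+2*al*u)-w)*((1-2*al*u+rm2)-w)*((1-al*u+rm1)+(1-al*u)))
  - ((c1*c2)^(3:ℕ) + Ppoly al c1 c2 u w)
    * Xpoly c1 c2 w (1+al*u) (1+2*al*u)
    * (-(((1-2*al*u+rm2)-w)*(1-w)) + c1^(2:ℕ)*((1-al*u+rm1)+(1-al*u))*((1-2*al*u+rm2)-w))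
noncomputable def Kfun4 (al c1 c2 u w r1 r2 rm1 rm2 : ℝ) : ℝ :=
  4*(c1*c2)^(5:ℕ)*(((1+2*al*u)-w)*(1-al*u)^(2:ℕ))
  - ((c1*c2)^(3:ℕ) + Ppoly al c1 c2 u w)
    * Xpoly c1 c2 w (1+al*u) (1+2*al*u)
    * ((1-w)*c2^(2:ℕ)*((1-2*al*u+rm2)+(1-2*al*u)) - ((1-al*u)-w)*(1-w) + c1^(2:ℕ)*(1-al*u)^(2:ℕ))

theorem base_identity (al c1 c2 u w : ℝ) :
    4*(c1*c2)^(5:ℕ)*(((1+2*al*u)-w)*((1-2*al*u)-w)*(1-al*u)^(2:ℕ))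
      - ((c1*c2)^(3:ℕ) + Ppoly al c1 c2 u w)
        * Xpoly c1 c2 w (1+al*u) (1+2*al*u) * Xppoly c1 c2 w (1-al*u) (1-2*al*u)
    = u^(2:ℕ) * polyA al c1 c2 u w + u*w * polyB al c1 c2 u w + w^(4:ℕ) * polyC al c1 c2 u w
      + polyD al c1 c2 u w * ((c1-c2)^(2:ℕ) - 1) := by
  simp only [Ppoly, Xpoly, Xppoly, polyA, polyB, polyC, polyD]
  ring

theorem decomp (al c1 c2 u w r1 r2 rm1 rm2 : ℝ) :
    Npoly al c1 c2 u w r1 r2 rm1 rm2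
    = u^(2:ℕ) * polyA al c1 c2 u w + u*w * polyB al c1 c2 u w + w^(4:ℕ) * polyC al c1 c2 u w
      + polyD al c1 c2 u w * ((c1-c2)^(2:ℕ) - 1)
      + r1 * Kfun1 al c1 c2 u w r1 r2 rm1 rm2
      + r2 * Kfun2 al c1 c2 u w r1 r2 rm1 rm2
      + rm1 * Kfun3 al c1 c2 u w r1 r2 rm1 rm2
      + rm2 * Kfun4 al c1 c2 u w r1 r2 rm1 rm2 := by
  have hX : Xpoly c1 c2 w (1+al*u+r1) (1+2*al*u+r2)
      = Xpoly c1 c2 w (1+al*u) (1+2*al*u)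
        + r1*(-((1-w)*((1+2*al*u+r2)-w)) + c1^(2:ℕ)*((1+al*u+r1)+(1+al*u))*(1-w))
        + r2*(c2^(2:ℕ) - (1-w)*((1+al*u)-w)) := by
    simp only [Xpoly]; ring
  have hXp : Xppoly c1 c2 w (1-al*u+rm1) (1-2*al*u+rm2)
      = Xppoly c1 c2 w (1-al*u) (1-2*al*u)
        + rm1*(-(((1-2*al*u+rm2)-w)*(1-w)) + c1^(2:ℕ)*((1-al*u+rm1)+(1-al*u))*((1-2*al*u+rm2)-w))
        + rm2*((1-w)*c2^(2:ℕ)*((1-2*al*u+rm2)+(1-2*al*u)) - ((1-al*u)-w)*(1-w) + c1^(2:ℕ)*(1-al*u)^(2:ℕ)) := by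
    simp only [Xppoly]; ring
  simp only [Npoly, Kfun1, Kfun2, Kfun3, Kfun4]
  rw [hX, hXp]
  linear_combination base_identity al c1 c2 u w
theorem contA (al c1 c2 : ℝ) : Continuous fun p : ℝ × ℝ => polyA al c1 c2 p.1 p.2 := by
  simp only [polyA]; fun_prop
theorem contB (al c1 c2 : ℝ) : Continuous fun p : ℝ × ℝ => polyB al c1 c2 p.1 p.2 := by
  simp only [polyB]; fun_prop
theorem contC (al c1 c2 : ℝ) : Continuous fun p : ℝ × ℝ => polyC al c1 c2 p.1 p.2 := by
  simp only [polyC]; fun_prop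
theorem contK1 (al c1 c2 : ℝ) :
    Continuous fun p : ℝ × ℝ × ℝ × ℝ × ℝ × ℝ =>
      Kfun1 al c1 c2 p.1 p.2.1 p.2.2.1 p.2.2.2.1 p.2.2.2.2.1 p.2.2.2.2.2 := by
  simp only [Kfun1, Ppoly, Xpoly, Xppoly]; fun_prop
theorem contK2 (al c1 c2 : ℝ) :
    Continuous fun p : ℝ × ℝ × ℝ × ℝ × ℝ × ℝ =>
      Kfun2 al c1 c2 p.1 p.2.1 p.2.2.1 p.2.2.2.1 p.2.2.2.2.1 p.2.2.2.2.2 := by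
  simp only [Kfun2, Ppoly, Xpoly, Xppoly]; fun_prop
theorem contK3 (al c1 c2 : ℝ) :
    Continuous fun p : ℝ × ℝ × ℝ × ℝ × ℝ × ℝ =>
      Kfun3 al c1 c2 p.1 p.2.1 p.2.2.1 p.2.2.2.1 p.2.2.2.2.1 p.2.2.2.2.2 := by
  simp only [Kfun3, Ppoly, Xpoly, Xppoly]; fun_prop
theorem contK4 (al c1 c2 : ℝ) :
    Continuous fun p : ℝ × ℝ × ℝ × ℝ × ℝ × ℝ =>
      Kfun4 al c1 c2 p.1 p.2.1 p.2.2.1 p.2.2.2.1 p.2.2.2.2.1 p.2.2.2.2.2 := by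
  simp only [Kfun4, Ppoly, Xpoly, Xppoly]; fun_prop
theorem contX (c1 c2 : ℝ) : Continuous fun p : ℝ × ℝ × ℝ => Xpoly c1 c2 p.1 p.2.1 p.2.2 := by
  simp only [Xpoly]; fun_prop
theorem contXp (c1 c2 : ℝ) : Continuous fun p : ℝ × ℝ × ℝ => Xppoly c1 c2 p.1 p.2.1 p.2.2 := by
  simp only [Xppoly]; fun_prop
theorem Pterm_eq (α c1 c2 t x u : ℝ) (hx : 0 < x) (hc1 : c1 ≠ 0) (hc2 : c2 ≠ 0)
    (hu : x⁻¹ = 2*u) :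
    -(2 ^ (1 - α) / (c1 * c2)) * t * x ^ (-α) +
      2 ^ (-(2 * α)) / (c1 * c2) * (3 / (c1 * c2) + 1) * t ^ 2 * x ^ (-(2 * α)) +
      α / (2 * c1 * c2) * x⁻¹ -
      2 ^ (-(3 * α)) / (c1 * c2) ^ 2 * (3 + 4 / (c1 * c2)) * t ^ 3 * x ^ (-(3 * α))
    = Ppoly α c1 c2 u (t / ((2:ℝ)^α * x^α)) / (c1 * c2)^3 := by
  have h2 : (0:ℝ) < 2 := two_pos
  have p1 : x ^ (-α) = (x^α)⁻¹ := by rw [Real.rpow_neg hx.le]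
  have p2 : x ^ (-(2*α)) = (x^α)⁻¹*(x^α)⁻¹ := by
    rw [show -(2*α) = -α + -α by ring, Real.rpow_add hx, Real.rpow_neg hx.le]
  have p3 : x ^ (-(3*α)) = (x^α)⁻¹*((x^α)⁻¹*(x^α)⁻¹) := by
    rw [show -(3*α) = -α + (-α + -α) by ring, Real.rpow_add hx, Real.rpow_add hx,
      Real.rpow_neg hx.le]
  have q1 : (2:ℝ) ^ (1-α) = 2*((2:ℝ)^α)⁻¹ := by
    rw [Real.rpow_sub h2, Real.rpow_one, div_eq_mul_inv]
  have q2 : (2:ℝ) ^ (-(2*α)) = ((2:ℝ)^α)⁻¹*((2:ℝ)^α)⁻¹ := by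
    rw [show -(2*α) = -α + -α by ring, Real.rpow_add h2, Real.rpow_neg h2.le]
  have q3 : (2:ℝ) ^ (-(3*α)) = ((2:ℝ)^α)⁻¹*(((2:ℝ)^α)⁻¹*((2:ℝ)^α)⁻¹) := by
    rw [show -(3*α) = -α + (-α + -α) by ring, Real.rpow_add h2, Real.rpow_add h2,
      Real.rpow_neg h2.le]
  have hxα : x^α ≠ 0 := (Real.rpow_pos_of_pos hx α).ne'
  have h2α : (2:ℝ)^α ≠ 0 := (Real.rpow_pos_of_pos h2 α).ne'
  simp only [Ppoly]
  rw [p1, p2, p3, q1, q2, q3, hu]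
  field_simp


theorem rpow_lin_approx (al : ℝ) (h0 : 0 < al) (h1 : al < 1) :
    ∀ x : ℝ, |x| ≤ 1/2 → |(1+x) ^ al - 1 - al * x| ≤ 4 * x^2 := by
  have hpos : ∀ y : ℝ, |y| ≤ 1/2 → (0:ℝ) < 1 + y := by
    intro y hy; rcases abs_le.mp hy with ⟨h, _⟩; linarith
  -- inner estimate : |(1+y)^(al-1) - 1| ≤ 4|y| on |y| ≤ 1/2
  have inner : ∀ y : ℝ, |y| ≤ 1/2 → |(1+y) ^ (al-1) - 1| ≤ 4 * |y| := by
    intro y hy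
    have hconv : Convex ℝ (Set.Icc (-(1/2):ℝ) (1/2)) := convex_Icc _ _
    have hder : ∀ z ∈ Set.Icc (-(1/2):ℝ) (1/2),
        HasDerivWithinAt (fun z : ℝ => (1+z) ^ (al-1)) ((al-1)*(1+z)^(al-2))
          (Set.Icc (-(1/2):ℝ) (1/2)) z := by
      intro z hz
      have hz2 : |z| ≤ 1/2 := abs_le.mpr ⟨hz.1, hz.2⟩
      have h1z : (0:ℝ) < 1 + z := hpos z hz2
      have := (Real.hasDerivAt_rpow_const (x := 1+z) (p := al-1)
        (Or.inl h1z.ne')).comp z ((hasDerivAt_id z).const_add 1)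
      have h' : HasDerivAt (fun z : ℝ => (1+z) ^ (al-1)) ((al-1)*(1+z)^(al-1-1)) z := by
        simpa [Function.comp_def] using this
      have : al - 1 - 1 = al - 2 := by ring
      rw [this] at h'
      exact h'.hasDerivWithinAt
    have hbound : ∀ z ∈ Set.Icc (-(1/2):ℝ) (1/2), ‖(al-1)*(1+z)^(al-2)‖ ≤ 4 := by
      intro z hz
      have hz2 : |z| ≤ 1/2 := abs_le.mpr ⟨hz.1, hz.2⟩
      have h1z : (0:ℝ) < 1 + z := hpos z hz2
      have hb : (1+z)^(al-2) ≤ 4 := by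
        have e1 : (1+z)^(al-2) = ((1+z)⁻¹)^(2-al) := by
          rw [Real.inv_rpow h1z.le, ← Real.rpow_neg h1z.le]
          congr 1; ring
        have e2 : ((1+z)⁻¹) ≤ 2 := by
          rw [inv_le_comm₀ h1z (by norm_num)]
          rcases abs_le.mp hz2 with ⟨h, _⟩; linarith
        have e3 : ((1+z)⁻¹)^(2-al) ≤ (2:ℝ)^(2-al) :=
          Real.rpow_le_rpow (by positivity) e2 (by linarith)
        have e4 : (2:ℝ)^(2-al) ≤ (2:ℝ)^(2:ℝ) :=
          Real.rpow_le_rpow_of_exponent_le (by norm_num) (by linarith)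
        have e5 : (2:ℝ)^(2:ℝ) = 4 := by
          rw [show (2:ℝ) = ((2:ℕ):ℝ) by norm_num, Real.rpow_natCast]; norm_num
        rw [e1]; linarith
      have hb2 : (0:ℝ) ≤ (1+z)^(al-2) := Real.rpow_nonneg h1z.le _
      rw [Real.norm_eq_abs, abs_mul, abs_of_nonneg hb2]
      have : |al - 1| ≤ 1 := by rw [abs_le]; constructor <;> linarith
      nlinarith
    have hy0 : (0:ℝ) ∈ Set.Icc (-(1/2):ℝ) (1/2) := by constructor <;> norm_num
    have hyy : y ∈ Set.Icc (-(1/2):ℝ) (1/2) := ⟨(abs_le.mp hy).1, (abs_le.mp hy).2⟩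
    have := hconv.norm_image_sub_le_of_norm_hasDerivWithin_le hder hbound hy0 hyy
    simpa [Real.one_rpow, Real.norm_eq_abs] using this
  intro x hx
  have hconv : Convex ℝ (Set.Icc (-|x|) (|x|)) := convex_Icc _ _
  have hsub : ∀ z ∈ Set.Icc (-|x|) (|x|), |z| ≤ 1/2 := by
    intro z hz
    have : |z| ≤ |x| := abs_le.mpr ⟨hz.1, hz.2⟩
    linarith
  have hder : ∀ z ∈ Set.Icc (-|x|) (|x|),
      HasDerivWithinAt (fun z : ℝ => (1+z)^al - 1 - al*z) (al*(1+z)^(al-1) - al)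
        (Set.Icc (-|x|) (|x|)) z := by
    intro z hz
    have h1z : (0:ℝ) < 1 + z := hpos z (hsub z hz)
    have h' : HasDerivAt (fun z : ℝ => (1+z) ^ al) (al*(1+z)^(al-1)) z := by
      simpa [Function.comp_def] using (Real.hasDerivAt_rpow_const (x := 1+z) (p := al)
        (Or.inl h1z.ne')).comp z ((hasDerivAt_id z).const_add 1)
    have h'' : HasDerivAt (fun z : ℝ => (1+z)^al - 1 - al*z) (al*(1+z)^(al-1) - 0 - al) z := by
      exact ((h'.sub_const 1).sub ((hasDerivAt_id z).const_mul al)) |>.congr_deriv (by ring)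
    simpa using h''.hasDerivWithinAt
  have hbound : ∀ z ∈ Set.Icc (-|x|) (|x|), ‖al*(1+z)^(al-1) - al‖ ≤ 4*|x| := by
    intro z hz
    have hz2 : |z| ≤ |x| := abs_le.mpr ⟨hz.1, hz.2⟩
    have := inner z (hsub z hz)
    have e : al*(1+z)^(al-1) - al = al * ((1+z)^(al-1) - 1) := by ring
    rw [Real.norm_eq_abs, e, abs_mul, abs_of_pos h0]
    have h4 : |(1+z)^(al-1) - 1| ≤ 4*|x| := le_trans this (by nlinarith [abs_nonneg z])
    nlinarith [abs_nonneg ((1+z)^(al-1) - 1)]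
  have h0mem : (0:ℝ) ∈ Set.Icc (-|x|) (|x|) := by
    constructor <;> simp [abs_nonneg, neg_nonpos.mpr (abs_nonneg x)]
  have hxmem : x ∈ Set.Icc (-|x|) (|x|) := ⟨neg_abs_le x, le_abs_self x⟩
  have := hconv.norm_image_sub_le_of_norm_hasDerivWithin_le hder hbound h0mem hxmem
  have e0 : (1+(0:ℝ))^al - 1 - al*0 = 0 := by simp [Real.one_rpow]
  rw [e0] at this
  simp only [sub_zero, Real.norm_eq_abs] at this
  calc |(1+x) ^ al - 1 - al * x| ≤ 4*|x| * |x| := this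
    _ = 4 * x^2 := by rw [mul_assoc, abs_mul_abs_self]; ring

/-- Uniform asymptotic expansion of `β_n(λ)` in the critical case `|c₁ − c₂| = 1`. -/
theorem jacobiBeta_uniform_expansion (α c₁ c₂ : ℝ)
    (hα : α ∈ Set.Ioo (1/3 : ℝ) (1/2)) (hc₁ : 0 < c₁) (hc₂ : 0 < c₂)
    (hcrit : |c₁ - c₂| = 1)
    (I : Set ℝ) (hI : I ⊆ Set.Ioi 0) (hIbdd : Bornology.IsBounded I) :
    OtildeI I
      (fun n t =>
        jacobiBeta (jacobiWeight α c₁ c₂) (jacobiDiag α) n t -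
          (-(2 ^ (1 - α) / (c₁ * c₂)) * t * (n : ℝ) ^ (-α) +
            2 ^ (-(2 * α)) / (c₁ * c₂) * (3 / (c₁ * c₂) + 1) * t ^ 2 * (n : ℝ) ^ (-(2 * α)) +
            α / (2 * c₁ * c₂) * (n : ℝ)⁻¹ -
            2 ^ (-(3 * α)) / (c₁ * c₂) ^ 2 * (3 + 4 / (c₁ * c₂)) * t ^ 3 * (n : ℝ) ^ (-(3 * α))))
      (fun n => (n : ℝ) ^ (-1 - α)) := by
  obtain ⟨hα1, hα2⟩ := hα
  have hal0 : 0 < α := by linarith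
  have hal1 : α < 1 := by linarith
  have hg0 : 0 < c₁ * c₂ := mul_pos hc₁ hc₂
  have hcc : (c₁ - c₂)^(2:ℕ) = 1 := by rw [← sq_abs, hcrit]; norm_num
  -- bound on I
  obtain ⟨M₀, hM₀⟩ := (isBounded_iff_forall_norm_le).mp hIbdd
  set M : ℝ := max M₀ 1 with hMdef
  have hM1 : (1:ℝ) ≤ M := le_max_right _ _
  have htM : ∀ t ∈ I, 0 < t ∧ t ≤ M := by
    intro t ht
    refine ⟨hI ht, ?_⟩
    have h := hM₀ t ht
    rw [Real.norm_eq_abs] at h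
    exact le_trans (le_abs_self t) (le_trans h (le_max_left _ _))
  -- radii for lower bounds on X, X'
  obtain ⟨δ₁, hδ₁0, hδ₁⟩ := Metric.continuousAt_iff.mp
    ((contX c₁ c₂).continuousAt (x := ((0:ℝ),(1:ℝ),(1:ℝ)))) (c₁*c₂) hg0
  obtain ⟨δ₂, hδ₂0, hδ₂⟩ := Metric.continuousAt_iff.mp
    ((contXp c₁ c₂).continuousAt (x := ((0:ℝ),(1:ℝ),(1:ℝ)))) (c₁*c₂) hg0
  have hXval : Xpoly c₁ c₂ 0 1 1 = 2*(c₁*c₂) := by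
    simp only [Xpoly]; linear_combination hcc
  have hXpval : Xppoly c₁ c₂ 0 1 1 = 2*(c₁*c₂) := by
    simp only [Xppoly]; linear_combination hcc
  -- compact bound for the coefficient functions
  set Φ : ℝ×ℝ×ℝ×ℝ×ℝ×ℝ → ℝ := fun p =>
    |polyA α c₁ c₂ p.1 p.2.1| + (|polyB α c₁ c₂ p.1 p.2.1| + (|polyC α c₁ c₂ p.1 p.2.1| +
    (|Kfun1 α c₁ c₂ p.1 p.2.1 p.2.2.1 p.2.2.2.1 p.2.2.2.2.1 p.2.2.2.2.2| +
    (|Kfun2 α c₁ c₂ p.1 p.2.1 p.2.2.1 p.2.2.2.1 p.2.2.2.2.1 p.2.2.2.2.2| +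
    (|Kfun3 α c₁ c₂ p.1 p.2.1 p.2.2.1 p.2.2.2.1 p.2.2.2.2.1 p.2.2.2.2.2| +
     |Kfun4 α c₁ c₂ p.1 p.2.1 p.2.2.1 p.2.2.2.1 p.2.2.2.2.1 p.2.2.2.2.2|))))) with hΦdef
  have hΦc : Continuous Φ := by
    rw [hΦdef]
    have hproj : Continuous fun p : ℝ×ℝ×ℝ×ℝ×ℝ×ℝ => ((p.1, p.2.1) : ℝ×ℝ) := by fun_prop
    exact (((contA α c₁ c₂).comp hproj).abs).add
      ((((contB α c₁ c₂).comp hproj).abs).add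
      ((((contC α c₁ c₂).comp hproj).abs).add
      (((contK1 α c₁ c₂).abs).add
      (((contK2 α c₁ c₂).abs).add
      (((contK3 α c₁ c₂).abs).add ((contK4 α c₁ c₂).abs))))))
  obtain ⟨C₀, hC₀⟩ := (isCompact_closedBall (0 : ℝ×ℝ×ℝ×ℝ×ℝ×ℝ) 1).exists_bound_of_continuousOn
    hΦc.continuousOn
  set C1 : ℝ := max C₀ 1 with hC1def
  have hC11 : (1:ℝ) ≤ C1 := le_max_right _ _
  have hC10 : (0:ℝ) < C1 := by linarith
  set ε : ℝ := min (min δ₁ δ₂) (1/4) with hεdef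
  have hε0 : 0 < ε := lt_min (lt_min hδ₁0 hδ₂0) (by norm_num)
  have hε14 : ε ≤ 1/4 := min_le_right _ _
  have hεδ₁ : ε ≤ δ₁ := le_trans (min_le_left _ _) (min_le_left _ _)
  have hεδ₂ : ε ≤ δ₂ := le_trans (min_le_left _ _) (min_le_right _ _)
  set C : ℝ := C1 * (65 + M + M^4) / (c₁*c₂)^5 with hCdef
  have hCpos : 0 < C := by
    have hM40 : (0:ℝ) ≤ M^4 := by positivity
    exact div_pos (mul_pos hC10 (by linarith only [hM1, hM40])) (pow_pos hg0 5)
  refine ⟨C, hCpos, ?_⟩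
  have evA : ∀ᶠ n : ℕ in Filter.atTop, 4/ε ≤ (n:ℝ) :=
    tendsto_natCast_atTop_atTop.eventually_ge_atTop _
  have evB : ∀ᶠ n : ℕ in Filter.atTop, 8*M/ε ≤ ((n:ℝ))^α :=
    ((tendsto_rpow_atTop hal0).comp tendsto_natCast_atTop_atTop).eventually_ge_atTop _
  obtain ⟨N, hN⟩ := Filter.eventually_atTop.mp (evA.and evB)
  refine ⟨N, ?_⟩
  intro n hn t ht
  obtain ⟨hn4ε, hn8M⟩ := hN n hn.le
  obtain ⟨ht0, htM'⟩ := htM t ht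
  obtain ⟨m, rfl⟩ : ∃ m, n = m + 1 := by
    refine ⟨n-1, ?_⟩
    have : 0 < (n:ℝ) := lt_of_lt_of_le (div_pos (by norm_num) hε0) hn4ε
    have : 0 < n := by exact_mod_cast this
    omega
  dsimp only
  set ν : ℝ := (m:ℝ) + 1 with hνdef
  have hν0 : 0 < ν := by positivity
  have hν1 : 1 ≤ ν := by
    have hm0 : (0:ℝ) ≤ (m:ℝ) := Nat.cast_nonneg m
    rw [hνdef]; linarith only [hm0]
  have hcastn : ((m+1 : ℕ) : ℝ) = ν := by rw [hνdef]; push_cast; ring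
  rw [hcastn] at hn4ε hn8M
  set s : ℝ := 2*ν with hsdef
  have hs0 : 0 < s := by rw [hsdef]; linarith only [hν0]
  set T : ℝ := s^α with hTdef
  have hT0 : 0 < T := Real.rpow_pos_of_pos hs0 α
  set u : ℝ := 1/s with hudef
  have hu0 : 0 < u := by rw [hudef]; exact div_pos (by norm_num) hs0
  have hus : s*u = 1 := by rw [hudef, mul_one_div, div_self hs0.ne']
  set w : ℝ := t/T with hwdef
  have hw0 : 0 < w := by rw [hwdef]; exact div_pos ht0 hT0
  -- smallness
  have huε : u ≤ ε/8 := by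
    have h4ν : 4 ≤ ν * ε := (div_le_iff₀ hε0).mp hn4ε
    rw [hudef, hsdef, div_le_div_iff₀ (by linarith only [hν0]) (by norm_num)]
    linarith only [h4ν]
  have hu132 : u ≤ 1/32 := by linarith only [huε, hε14, hε0]
  have hνα0 : 0 < ν^α := Real.rpow_pos_of_pos hν0 α
  have hTν : ν^α ≤ T := by
    rw [hTdef, hsdef]
    exact Real.rpow_le_rpow hν0.le (by linarith only [hν0]) hal0.le
  have hwb : w ≤ M/ν^α := by
    rw [hwdef]
    exact div_le_div₀ (by linarith only [ht0, htM']) htM' hνα0 hTν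
  have hwε : w ≤ ε/8 := by
    refine hwb.trans ?_
    have h8ν : 8*M ≤ ν^α * ε := (div_le_iff₀ hε0).mp hn8M
    rw [div_le_div_iff₀ hνα0 (by norm_num)]
    linarith only [h8ν]
  have hw132 : w ≤ 1/32 := by linarith only [hwε, hε14, hε0]
  have h1w : 0 < 1 - w := by linarith only [hw132]
  -- the four rpow quantities
  have hb1 : (0:ℝ) < 1+u := by linarith only [hu0]
  have hb2 : (0:ℝ) < 1+2*u := by linarith only [hu0]
  have hbm1 : (0:ℝ) < 1-u := by linarith only [hu132]
  have hbm2 : (0:ℝ) < 1-2*u := by linarith only [hu132]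
  set a1 : ℝ := (1+u)^α with ha1d
  set a2 : ℝ := (1+2*u)^α with ha2d
  set am1 : ℝ := (1-u)^α with ham1d
  set am2 : ℝ := (1-2*u)^α with ham2d
  have ha1p : 0 < a1 := Real.rpow_pos_of_pos hb1 α
  have ha2p : 0 < a2 := Real.rpow_pos_of_pos hb2 α
  have ham1p : 0 < am1 := Real.rpow_pos_of_pos hbm1 α
  have ham2p : 0 < am2 := Real.rpow_pos_of_pos hbm2 α
  set r1 : ℝ := a1 - 1 - α*u with hr1d
  set r2 : ℝ := a2 - 1 - 2*α*u with hr2d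
  set rm1 : ℝ := am1 - 1 + α*u with hrm1d
  set rm2 : ℝ := am2 - 1 + 2*α*u with hrm2d
  -- Taylor bounds
  have hr1b : |r1| ≤ 16*u^2 := by
    have h := rpow_lin_approx α hal0 hal1 u (by rw [abs_of_pos hu0]; linarith only [hu132])
    have e : r1 = (1+u)^α - 1 - α*u := by rw [hr1d, ha1d]
    rw [e]; linarith only [h, sq_nonneg u]
  have hr2b : |r2| ≤ 16*u^2 := by
    have h := rpow_lin_approx α hal0 hal1 (2*u) (by rw [abs_of_pos (by linarith only [hu0])]; linarith only [hu132])
    have e : r2 = (1+2*u)^α - 1 - α*(2*u) := by rw [hr2d, ha2d]; ring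
    rw [e]; linarith only [h, sq_nonneg u]
  have hrm1b : |rm1| ≤ 16*u^2 := by
    have h := rpow_lin_approx α hal0 hal1 (-u) (by rw [abs_neg, abs_of_pos hu0]; linarith only [hu132])
    have e2 : (1:ℝ)+(-u) = 1-u := by ring
    rw [e2] at h
    have e : rm1 = (1-u)^α - 1 - α*(-u) := by rw [hrm1d, ham1d]; ring
    rw [e]; linarith only [h, sq_nonneg u]
  have hrm2b : |rm2| ≤ 16*u^2 := by
    have h := rpow_lin_approx α hal0 hal1 (-(2*u)) (by rw [abs_neg, abs_of_pos (by linarith only [hu0])]; linarith only [hu132])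
    have e2 : (1:ℝ)+(-(2*u)) = 1-2*u := by ring
    rw [e2] at h
    have e : rm2 = (1-2*u)^α - 1 - α*(-(2*u)) := by rw [hrm2d, ham2d]; ring
    rw [e]; linarith only [h, sq_nonneg u]
  have hu2small : 16*u^2 ≤ u/2 := by
    have hmul : u*u ≤ u*(1/32) := mul_le_mul_of_nonneg_left hu132 hu0.le
    nlinarith only [hmul]
  -- deviations of a's from 1
  have hdev1 : |a1 - 1| ≤ 4*u := by
    have e : a1 - 1 = α*u + r1 := by rw [hr1d]; ring
    rw [e]
    calc |α*u + r1| ≤ |α*u| + |r1| := abs_add_le _ _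
      _ ≤ 4*u := by
          rw [abs_of_nonneg (mul_nonneg hal0.le hu0.le)]
          have hax := mul_le_mul_of_nonneg_right hal1.le hu0.le
          linarith only [hr1b, hu2small, hax, hu0]
  have hdev2 : |a2 - 1| ≤ 4*u := by
    have e : a2 - 1 = 2*α*u + r2 := by rw [hr2d]; ring
    rw [e]
    calc |2*α*u + r2| ≤ |2*α*u| + |r2| := abs_add_le _ _
      _ ≤ 4*u := by
          rw [abs_of_nonneg (mul_nonneg (mul_nonneg (by norm_num) hal0.le) hu0.le)]
          have hax := mul_le_mul_of_nonneg_right hal1.le hu0.le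
          linarith only [hr2b, hu2small, hax, hu0]
  have hdevm1 : |am1 - 1| ≤ 4*u := by
    have e : am1 - 1 = -(α*u) + rm1 := by rw [hrm1d]; ring
    rw [e]
    calc |-(α*u) + rm1| ≤ |-(α*u)| + |rm1| := abs_add_le _ _
      _ ≤ 4*u := by
          rw [abs_neg, abs_of_nonneg (mul_nonneg hal0.le hu0.le)]
          have hax := mul_le_mul_of_nonneg_right hal1.le hu0.le
          linarith only [hrm1b, hu2small, hax, hu0]
  have hdevm2 : |am2 - 1| ≤ 4*u := by
    have e : am2 - 1 = -(2*α*u) + rm2 := by rw [hrm2d]; ring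
    rw [e]
    calc |-(2*α*u) + rm2| ≤ |-(2*α*u)| + |rm2| := abs_add_le _ _
      _ ≤ 4*u := by
          rw [abs_neg, abs_of_nonneg (mul_nonneg (mul_nonneg (by norm_num) hal0.le) hu0.le)]
          have hax := mul_le_mul_of_nonneg_right hal1.le hu0.le
          linarith only [hrm2b, hu2small, hax, hu0]
  have h4uε : 4*u < ε := by linarith only [huε, hε0]
  have hwε' : w < ε := by linarith only [hwε, hε0]
  have ham2w : 0 < am2 - w := by
    have hd := abs_le.mp hdevm2
    linarith only [hd.1, hw132, hu132]
  -- lower bounds for X and X'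
  have hXlow : c₁*c₂ < Xpoly c₁ c₂ w a1 a2 := by
    have hd : dist ((w, a1, a2) : ℝ×ℝ×ℝ) ((0:ℝ),(1:ℝ),(1:ℝ)) < δ₁ := by
      simp only [Prod.dist_eq, Real.dist_eq]
      apply max_lt
      · rw [sub_zero, abs_of_pos hw0]; linarith only [hwε', hεδ₁]
      apply max_lt
      · exact lt_of_le_of_lt hdev1 (by linarith only [h4uε, hεδ₁])
      · exact lt_of_le_of_lt hdev2 (by linarith only [h4uε, hεδ₁])
    have h2 := hδ₁ hd
    rw [hXval, Real.dist_eq] at h2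
    have h3 := abs_lt.mp h2
    linarith only [h3.1, hg0]
  have hXplow : c₁*c₂ < Xppoly c₁ c₂ w am1 am2 := by
    have hd : dist ((w, am1, am2) : ℝ×ℝ×ℝ) ((0:ℝ),(1:ℝ),(1:ℝ)) < δ₂ := by
      simp only [Prod.dist_eq, Real.dist_eq]
      apply max_lt
      · rw [sub_zero, abs_of_pos hw0]; linarith only [hwε', hεδ₂]
      apply max_lt
      · exact lt_of_le_of_lt hdevm1 (by linarith only [h4uε, hεδ₂])
      · exact lt_of_le_of_lt hdevm2 (by linarith only [h4uε, hεδ₂])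
    have h2 := hδ₂ hd
    rw [hXpval, Real.dist_eq] at h2
    have h3 := abs_lt.mp h2
    linarith only [h3.1, hg0]
  have hXpos : 0 < Xpoly c₁ c₂ w a1 a2 := lt_trans hg0 hXlow
  have hXppos : 0 < Xppoly c₁ c₂ w am1 am2 := lt_trans hg0 hXplow
  -- values of q and b
  have hq2n : jacobiDiag α (2*(m+1)) = T := by
    rw [jacobiDiag, show ((2*(m+1):ℕ):ℝ) = s from by push_cast; linear_combination -hsdef - 2*hνdef, hTdef]
  have hq2n1 : jacobiDiag α (2*(m+1)+1) = T*a1 := by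
    rw [jacobiDiag, show ((2*(m+1)+1:ℕ):ℝ) = s*(1+u) from by push_cast; linear_combination -hsdef - (1:ℝ)*hus - 2*hνdef]
    rw [Real.mul_rpow hs0.le hb1.le, hTdef, ha1d]
  have hq2n2 : jacobiDiag α (2*(m+1)+2) = T*a2 := by
    rw [jacobiDiag, show ((2*(m+1)+2:ℕ):ℝ) = s*(1+2*u) from by push_cast; linear_combination -hsdef - (2:ℝ)*hus - 2*hνdef]
    rw [Real.mul_rpow hs0.le hb2.le, hTdef, ha2d]
  have hqm0 : jacobiDiag α (2*m) = T*am2 := by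
    rw [jacobiDiag, show ((2*m:ℕ):ℝ) = s*(1-2*u) from by push_cast; linear_combination -hsdef - (-2:ℝ)*hus - 2*hνdef]
    rw [Real.mul_rpow hs0.le hbm2.le, hTdef, ham2d]
  have hqm1 : jacobiDiag α (2*m+1) = T*am1 := by
    rw [jacobiDiag, show ((2*m+1:ℕ):ℝ) = s*(1-u) from by push_cast; linear_combination -hsdef - (-1:ℝ)*hus - 2*hνdef]
    rw [Real.mul_rpow hs0.le hbm1.le, hTdef, ham1d]
  have hqm2 : jacobiDiag α (2*m+2) = T := by
    rw [jacobiDiag, show ((2*m+2:ℕ):ℝ) = s from by push_cast; linear_combination -hsdef - 2*hνdef, hTdef]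
  have hb2n : jacobiWeight α c₁ c₂ (2*(m+1)) = T*c₂ := by
    rw [jacobiWeight, if_neg (by rw [Nat.odd_iff]; omega)]
    rw [show ((2*(m+1):ℕ):ℝ) = s from by push_cast; linear_combination -hsdef - 2*hνdef, hTdef]
  have hb2n1 : jacobiWeight α c₁ c₂ (2*(m+1)+1) = T*(a1*c₁) := by
    rw [jacobiWeight, if_pos (by rw [Nat.odd_iff]; omega)]
    rw [show ((2*(m+1)+1:ℕ):ℝ) = s*(1+u) from by push_cast; linear_combination -hsdef - (1:ℝ)*hus - 2*hνdef]
    rw [Real.mul_rpow hs0.le hb1.le, hTdef, ha1d]; ring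
  have hb2n2 : jacobiWeight α c₁ c₂ (2*(m+1)+2) = T*(a2*c₂) := by
    rw [jacobiWeight, if_neg (by rw [Nat.odd_iff]; omega)]
    rw [show ((2*(m+1)+2:ℕ):ℝ) = s*(1+2*u) from by push_cast; linear_combination -hsdef - (2:ℝ)*hus - 2*hνdef]
    rw [Real.mul_rpow hs0.le hb2.le, hTdef, ha2d]; ring
  have hbg : jacobiWeight α c₁ c₂ (2*(m+1)-1) = T*(am1*c₁) := by
    rw [show (2*(m+1)-1 : ℕ) = 2*m+1 from by omega]
    rw [jacobiWeight, if_pos (by rw [Nat.odd_iff]; omega)]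
    rw [show ((2*m+1:ℕ):ℝ) = s*(1-u) from by push_cast; linear_combination -hsdef - (-1:ℝ)*hus - 2*hνdef]
    rw [Real.mul_rpow hs0.le hbm1.le, hTdef, ham1d]; ring
  have hbm0 : jacobiWeight α c₁ c₂ (2*m) = T*(am2*c₂) := by
    rw [jacobiWeight, if_neg (by rw [Nat.odd_iff]; omega)]
    rw [show ((2*m:ℕ):ℝ) = s*(1-2*u) from by push_cast; linear_combination -hsdef - (-2:ℝ)*hus - 2*hνdef]
    rw [Real.mul_rpow hs0.le hbm2.le, hTdef, ham2d]; ring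
  have hbm1' : jacobiWeight α c₁ c₂ (2*m+1) = T*(am1*c₁) := by
    rw [jacobiWeight, if_pos (by rw [Nat.odd_iff]; omega)]
    rw [show ((2*m+1:ℕ):ℝ) = s*(1-u) from by push_cast; linear_combination -hsdef - (-1:ℝ)*hus - 2*hνdef]
    rw [Real.mul_rpow hs0.le hbm1.le, hTdef, ham1d]; ring
  have hbm2' : jacobiWeight α c₁ c₂ (2*m+2) = T*c₂ := by
    rw [jacobiWeight, if_neg (by rw [Nat.odd_iff]; omega)]
    rw [show ((2*m+2:ℕ):ℝ) = s from by push_cast; linear_combination -hsdef - 2*hνdef, hTdef]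
  have htw : t = T*w := by rw [hwdef]; field_simp
  have hTTw : T - T*w ≠ 0 := by
    have e : T - T*w = T*(1-w) := by ring
    rw [e]; exact (mul_pos hT0 h1w).ne'
  have hTam2w : T*am2 - T*w ≠ 0 := by
    have e : T*am2 - T*w = T*(am2-w) := by ring
    rw [e]; exact (mul_pos hT0 ham2w).ne'
  -- Poincaré coefficients
  have hF : jacobiF (jacobiWeight α c₁ c₂) (jacobiDiag α) (m+1) t
      = Xpoly c₁ c₂ w a1 a2 / ((1-w)*a1*a2*(c₁*c₂)) := by
    simp only [jacobiF]
    rw [hq2n2, hq2n, hq2n1, hb2n, hb2n1, hb2n2, htw]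
    simp only [Xpoly]
    field_simp [hT0.ne', ha1p.ne', ha2p.ne', h1w.ne', hc₁.ne', hc₂.ne', hTTw]
  have hF' : jacobiF (jacobiWeight α c₁ c₂) (jacobiDiag α) m t
      = Xppoly c₁ c₂ w am1 am2 / ((am2-w)*am1*(c₁*c₂)) := by
    simp only [jacobiF]
    rw [hqm2, hqm0, hqm1, hbm0, hbm1', hbm2', htw]
    simp only [Xppoly]
    field_simp [hT0.ne', ham1p.ne', ham2p.ne', ham2w.ne', hc₁.ne', hc₂.ne', hTam2w]
  have hG : jacobiG (jacobiWeight α c₁ c₂) (jacobiDiag α) (m+1) t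
      = (a2-w)*am1/((1-w)*(a1*a2)) := by
    simp only [jacobiG]
    rw [hq2n2, hq2n, hbg, hb2n, hb2n1, hb2n2, htw]
    field_simp [hT0.ne', ha1p.ne', ha2p.ne', ham1p.ne', h1w.ne', hc₁.ne', hc₂.ne', hTTw]
  have hNeq : Npoly α c₁ c₂ u w r1 r2 rm1 rm2
      = 4*(c₁*c₂)^(5:ℕ)*((a2-w)*(am2-w)*am1^(2:ℕ))
        - ((c₁*c₂)^(3:ℕ) + Ppoly α c₁ c₂ u w)
          * Xpoly c₁ c₂ w a1 a2 * Xppoly c₁ c₂ w am1 am2 := by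
    have e1 : 1+α*u+r1 = a1 := by rw [hr1d]; ring
    have e2 : 1+2*α*u+r2 = a2 := by rw [hr2d]; ring
    have e3 : 1-α*u+rm1 = am1 := by rw [hrm1d]; ring
    have e4 : 1-2*α*u+rm2 = am2 := by rw [hrm2d]; ring
    rw [Npoly, e1, e2, e3, e4]
  have hkey : jacobiBeta (jacobiWeight α c₁ c₂) (jacobiDiag α) (m+1) t
      = Ppoly α c₁ c₂ u w / (c₁*c₂)^(3:ℕ)
        + Npoly α c₁ c₂ u w r1 r2 rm1 rm2
          / ((c₁*c₂)^(3:ℕ) * Xpoly c₁ c₂ w a1 a2 * Xppoly c₁ c₂ w am1 am2) := by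
    simp only [jacobiBeta, Nat.add_sub_cancel]
    rw [hF, hF', hG, hNeq]
    field_simp [hT0.ne', ha1p.ne', ha2p.ne', ham1p.ne', ham2p.ne', h1w.ne', ham2w.ne',
      hc₁.ne', hc₂.ne', hXpos.ne', hXppos.ne', hg0.ne']
    ring
  -- rewrite the target P-term
  rw [hcastn, hkey,
    Pterm_eq α c₁ c₂ t ν u hν0 hc₁.ne' hc₂.ne' (by rw [hudef, hsdef]; field_simp),
    show t/((2:ℝ)^α * ν^α) = w from by
      rw [hwdef, hTdef, hsdef, Real.mul_rpow (by norm_num) hν0.le],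
    show Ppoly α c₁ c₂ u w / (c₁*c₂)^3 = Ppoly α c₁ c₂ u w / (c₁*c₂)^(3:ℕ) from rfl,
    add_sub_cancel_left, abs_div]
  have hden : 0 < (c₁*c₂)^(3:ℕ) * Xpoly c₁ c₂ w a1 a2 * Xppoly c₁ c₂ w am1 am2 :=
    mul_pos (mul_pos (pow_pos hg0 3) hXpos) hXppos
  rw [abs_of_pos hden]
  -- numerator bound
  have hp6 : ((u, w, r1, r2, rm1, rm2) : ℝ×ℝ×ℝ×ℝ×ℝ×ℝ) ∈
      Metric.closedBall (0 : ℝ×ℝ×ℝ×ℝ×ℝ×ℝ) 1 := by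
    have hr1s : |r1| ≤ 1 := by linarith only [hr1b, hu2small, hu132, hu0]
    have hr2s : |r2| ≤ 1 := by linarith only [hr2b, hu2small, hu132, hu0]
    have hrm1s : |rm1| ≤ 1 := by linarith only [hrm1b, hu2small, hu132, hu0]
    have hrm2s : |rm2| ≤ 1 := by linarith only [hrm2b, hu2small, hu132, hu0]
    simp only [Metric.mem_closedBall, Prod.dist_eq, Real.dist_eq, Prod.fst_zero, Prod.snd_zero, sub_zero]
    refine max_le ?_ (max_le ?_ (max_le ?_ (max_le ?_ (max_le ?_ ?_))))
    · rw [abs_of_pos hu0]; linarith only [hu132]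
    · rw [abs_of_pos hw0]; linarith only [hw132]
    · exact hr1s
    · exact hr2s
    · exact hrm1s
    · exact hrm2s
  have hΦb := hC₀ _ hp6
  rw [Real.norm_eq_abs] at hΦb
  have hΦeval : Φ (u, w, r1, r2, rm1, rm2)
      = |polyA α c₁ c₂ u w| + (|polyB α c₁ c₂ u w| + (|polyC α c₁ c₂ u w| +
        (|Kfun1 α c₁ c₂ u w r1 r2 rm1 rm2| + (|Kfun2 α c₁ c₂ u w r1 r2 rm1 rm2| +
        (|Kfun3 α c₁ c₂ u w r1 r2 rm1 rm2| + |Kfun4 α c₁ c₂ u w r1 r2 rm1 rm2|))))) := by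
    rw [hΦdef]
  have hΦsum : |polyA α c₁ c₂ u w| + (|polyB α c₁ c₂ u w| + (|polyC α c₁ c₂ u w| +
        (|Kfun1 α c₁ c₂ u w r1 r2 rm1 rm2| + (|Kfun2 α c₁ c₂ u w r1 r2 rm1 rm2| +
        (|Kfun3 α c₁ c₂ u w r1 r2 rm1 rm2| + |Kfun4 α c₁ c₂ u w r1 r2 rm1 rm2|))))) ≤ C1 := by
    rw [← hΦeval]
    exact le_trans (le_abs_self _) (le_trans hΦb (le_max_left _ _))
  have habsA : |polyA α c₁ c₂ u w| ≤ C1 := by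
    have := abs_nonneg (polyB α c₁ c₂ u w); have := abs_nonneg (polyC α c₁ c₂ u w)
    have := abs_nonneg (Kfun1 α c₁ c₂ u w r1 r2 rm1 rm2)
    have := abs_nonneg (Kfun2 α c₁ c₂ u w r1 r2 rm1 rm2)
    have := abs_nonneg (Kfun3 α c₁ c₂ u w r1 r2 rm1 rm2)
    have := abs_nonneg (Kfun4 α c₁ c₂ u w r1 r2 rm1 rm2)
    linarith
  have habsB : |polyB α c₁ c₂ u w| ≤ C1 := by
    have := abs_nonneg (polyA α c₁ c₂ u w); have := abs_nonneg (polyC α c₁ c₂ u w)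
    have := abs_nonneg (Kfun1 α c₁ c₂ u w r1 r2 rm1 rm2)
    have := abs_nonneg (Kfun2 α c₁ c₂ u w r1 r2 rm1 rm2)
    have := abs_nonneg (Kfun3 α c₁ c₂ u w r1 r2 rm1 rm2)
    have := abs_nonneg (Kfun4 α c₁ c₂ u w r1 r2 rm1 rm2)
    linarith
  have habsC : |polyC α c₁ c₂ u w| ≤ C1 := by
    have := abs_nonneg (polyA α c₁ c₂ u w); have := abs_nonneg (polyB α c₁ c₂ u w)
    have := abs_nonneg (Kfun1 α c₁ c₂ u w r1 r2 rm1 rm2)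
    have := abs_nonneg (Kfun2 α c₁ c₂ u w r1 r2 rm1 rm2)
    have := abs_nonneg (Kfun3 α c₁ c₂ u w r1 r2 rm1 rm2)
    have := abs_nonneg (Kfun4 α c₁ c₂ u w r1 r2 rm1 rm2)
    linarith
  have habsK1 : |Kfun1 α c₁ c₂ u w r1 r2 rm1 rm2| ≤ C1 := by
    have := abs_nonneg (polyA α c₁ c₂ u w); have := abs_nonneg (polyB α c₁ c₂ u w)
    have := abs_nonneg (polyC α c₁ c₂ u w)
    have := abs_nonneg (Kfun2 α c₁ c₂ u w r1 r2 rm1 rm2)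
    have := abs_nonneg (Kfun3 α c₁ c₂ u w r1 r2 rm1 rm2)
    have := abs_nonneg (Kfun4 α c₁ c₂ u w r1 r2 rm1 rm2)
    linarith
  have habsK2 : |Kfun2 α c₁ c₂ u w r1 r2 rm1 rm2| ≤ C1 := by
    have := abs_nonneg (polyA α c₁ c₂ u w); have := abs_nonneg (polyB α c₁ c₂ u w)
    have := abs_nonneg (polyC α c₁ c₂ u w)
    have := abs_nonneg (Kfun1 α c₁ c₂ u w r1 r2 rm1 rm2)
    have := abs_nonneg (Kfun3 α c₁ c₂ u w r1 r2 rm1 rm2)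
    have := abs_nonneg (Kfun4 α c₁ c₂ u w r1 r2 rm1 rm2)
    linarith
  have habsK3 : |Kfun3 α c₁ c₂ u w r1 r2 rm1 rm2| ≤ C1 := by
    have := abs_nonneg (polyA α c₁ c₂ u w); have := abs_nonneg (polyB α c₁ c₂ u w)
    have := abs_nonneg (polyC α c₁ c₂ u w)
    have := abs_nonneg (Kfun1 α c₁ c₂ u w r1 r2 rm1 rm2)
    have := abs_nonneg (Kfun2 α c₁ c₂ u w r1 r2 rm1 rm2)
    have := abs_nonneg (Kfun4 α c₁ c₂ u w r1 r2 rm1 rm2)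
    linarith
  have habsK4 : |Kfun4 α c₁ c₂ u w r1 r2 rm1 rm2| ≤ C1 := by
    have := abs_nonneg (polyA α c₁ c₂ u w); have := abs_nonneg (polyB α c₁ c₂ u w)
    have := abs_nonneg (polyC α c₁ c₂ u w)
    have := abs_nonneg (Kfun1 α c₁ c₂ u w r1 r2 rm1 rm2)
    have := abs_nonneg (Kfun2 α c₁ c₂ u w r1 r2 rm1 rm2)
    have := abs_nonneg (Kfun3 α c₁ c₂ u w r1 r2 rm1 rm2)
    linarith
  have hNb : |Npoly α c₁ c₂ u w r1 r2 rm1 rm2| ≤ C1 * (65*u^2 + u*w + w^4) := by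
    have hdec := decomp α c₁ c₂ u w r1 r2 rm1 rm2
    rw [hcc] at hdec
    simp only [sub_self, mul_zero, add_zero] at hdec
    rw [hdec]
    have t1 : |u^(2:ℕ) * polyA α c₁ c₂ u w| ≤ u^2 * C1 := by
      rw [abs_mul, abs_of_nonneg (by positivity : (0:ℝ) ≤ u^(2:ℕ))]
      exact mul_le_mul_of_nonneg_left habsA (by positivity)
    have t2 : |u*w * polyB α c₁ c₂ u w| ≤ u*w * C1 := by
      rw [abs_mul, abs_of_nonneg (mul_nonneg hu0.le hw0.le)]
      exact mul_le_mul_of_nonneg_left habsB (mul_nonneg hu0.le hw0.le)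
    have t3 : |w^(4:ℕ) * polyC α c₁ c₂ u w| ≤ w^4 * C1 := by
      rw [abs_mul, abs_of_nonneg (by positivity : (0:ℝ) ≤ w^(4:ℕ))]
      exact mul_le_mul_of_nonneg_left habsC (by positivity)
    have t4 : |r1 * Kfun1 α c₁ c₂ u w r1 r2 rm1 rm2| ≤ 16*u^2 * C1 := by
      rw [abs_mul]
      exact mul_le_mul hr1b habsK1 (abs_nonneg _) (by positivity)
    have t5 : |r2 * Kfun2 α c₁ c₂ u w r1 r2 rm1 rm2| ≤ 16*u^2 * C1 := by
      rw [abs_mul]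
      exact mul_le_mul hr2b habsK2 (abs_nonneg _) (by positivity)
    have t6 : |rm1 * Kfun3 α c₁ c₂ u w r1 r2 rm1 rm2| ≤ 16*u^2 * C1 := by
      rw [abs_mul]
      exact mul_le_mul hrm1b habsK3 (abs_nonneg _) (by positivity)
    have t7 : |rm2 * Kfun4 α c₁ c₂ u w r1 r2 rm1 rm2| ≤ 16*u^2 * C1 := by
      rw [abs_mul]
      exact mul_le_mul hrm2b habsK4 (abs_nonneg _) (by positivity)
    have h6 := abs_add_le (u^(2:ℕ) * polyA α c₁ c₂ u w + u*w * polyB α c₁ c₂ u w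
        + w^(4:ℕ) * polyC α c₁ c₂ u w + r1 * Kfun1 α c₁ c₂ u w r1 r2 rm1 rm2
        + r2 * Kfun2 α c₁ c₂ u w r1 r2 rm1 rm2 + rm1 * Kfun3 α c₁ c₂ u w r1 r2 rm1 rm2)
        (rm2 * Kfun4 α c₁ c₂ u w r1 r2 rm1 rm2)
    have h5 := abs_add_le (u^(2:ℕ) * polyA α c₁ c₂ u w + u*w * polyB α c₁ c₂ u w
        + w^(4:ℕ) * polyC α c₁ c₂ u w + r1 * Kfun1 α c₁ c₂ u w r1 r2 rm1 rm2
        + r2 * Kfun2 α c₁ c₂ u w r1 r2 rm1 rm2) (rm1 * Kfun3 α c₁ c₂ u w r1 r2 rm1 rm2)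
    have h4 := abs_add_le (u^(2:ℕ) * polyA α c₁ c₂ u w + u*w * polyB α c₁ c₂ u w
        + w^(4:ℕ) * polyC α c₁ c₂ u w + r1 * Kfun1 α c₁ c₂ u w r1 r2 rm1 rm2)
        (r2 * Kfun2 α c₁ c₂ u w r1 r2 rm1 rm2)
    have h3 := abs_add_le (u^(2:ℕ) * polyA α c₁ c₂ u w + u*w * polyB α c₁ c₂ u w
        + w^(4:ℕ) * polyC α c₁ c₂ u w) (r1 * Kfun1 α c₁ c₂ u w r1 r2 rm1 rm2)
    have h2 := abs_add_le (u^(2:ℕ) * polyA α c₁ c₂ u w + u*w * polyB α c₁ c₂ u w)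
        (w^(4:ℕ) * polyC α c₁ c₂ u w)
    have h1 := abs_add_le (u^(2:ℕ) * polyA α c₁ c₂ u w) (u*w * polyB α c₁ c₂ u w)
    linarith only [t1, t2, t3, t4, t5, t6, t7, h1, h2, h3, h4, h5, h6, hC10, sq_nonneg u]
  -- denominator bound
  have hdenlow : (c₁*c₂)^(5:ℕ) ≤ (c₁*c₂)^(3:ℕ) * Xpoly c₁ c₂ w a1 a2 * Xppoly c₁ c₂ w am1 am2 := by
    have s0 : (c₁*c₂)*(c₁*c₂) ≤ Xpoly c₁ c₂ w a1 a2 * Xppoly c₁ c₂ w am1 am2 :=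
      mul_le_mul hXlow.le hXplow.le hg0.le (le_trans hg0.le hXlow.le)
    calc (c₁*c₂)^(5:ℕ) = (c₁*c₂)^(3:ℕ) * ((c₁*c₂)*(c₁*c₂)) := by ring
      _ ≤ (c₁*c₂)^(3:ℕ) * (Xpoly c₁ c₂ w a1 a2 * Xppoly c₁ c₂ w am1 am2) :=
          mul_le_mul_of_nonneg_left s0 (pow_nonneg hg0.le 3)
      _ = (c₁*c₂)^(3:ℕ) * Xpoly c₁ c₂ w a1 a2 * Xppoly c₁ c₂ w am1 am2 := by ring
  have hg5 : (0:ℝ) < (c₁*c₂)^(5:ℕ) := pow_pos hg0 5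
  -- power comparisons
  have huν : u ≤ ν⁻¹ := by
    rw [hudef, hsdef, show ν⁻¹ = 1/ν from (one_div ν).symm]
    exact div_le_div_of_nonneg_left (by norm_num) hν0 (by linarith only [hν0])
  have hναν : ν^α ≤ ν := by
    calc ν^α ≤ ν^(1:ℝ) := Real.rpow_le_rpow_of_exponent_le hν1 (by linarith only [hal1])
      _ = ν := Real.rpow_one ν
  have hinvν : ν⁻¹ ≤ (ν^α)⁻¹ := inv_anti₀ hνα0 hναν
  have hbd1 : u^2 ≤ ν⁻¹*(ν^α)⁻¹ := by
    have h' : u*u ≤ ν⁻¹*(ν^α)⁻¹ :=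
      mul_le_mul huν (huν.trans hinvν) hu0.le (inv_nonneg.mpr hν0.le)
    linarith only [h']
  have hwb' : w ≤ M*(ν^α)⁻¹ := by
    rw [show M*(ν^α)⁻¹ = M/(ν^α) from by rw [div_eq_mul_inv]]
    exact hwb
  have hbd2 : u*w ≤ M*(ν⁻¹*(ν^α)⁻¹) := by
    have h' : u*w ≤ ν⁻¹*(M*(ν^α)⁻¹) :=
      mul_le_mul huν hwb' hw0.le (inv_nonneg.mpr hν0.le)
    linarith only [h']
  have hbd3 : w^4 ≤ M^4*(ν⁻¹*(ν^α)⁻¹) := by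
    have hw4 : w^4 ≤ (M*(ν^α)⁻¹)^4 := pow_le_pow_left₀ hw0.le hwb' 4
    have h3a : ν ≤ (ν^α)^(3:ℕ) := by
      have h := Real.rpow_le_rpow_of_exponent_le hν1 (by linarith only [hα1] : (1:ℝ) ≤ α*3)
      rw [Real.rpow_one] at h
      rw [Real.rpow_mul hν0.le, show (3:ℝ) = ((3:ℕ):ℝ) from by norm_num,
        Real.rpow_natCast] at h
      exact h
    have h3b : ((ν^α)⁻¹)^(3:ℕ) ≤ ν⁻¹ := by
      rw [inv_pow]
      exact inv_anti₀ hν0 h3a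
    have hνi : (0:ℝ) ≤ (ν^α)⁻¹ := inv_nonneg.mpr hνα0.le
    calc w^4 ≤ (M*(ν^α)⁻¹)^4 := hw4
      _ = M^4*(((ν^α)⁻¹)^(3:ℕ)*(ν^α)⁻¹) := by ring
      _ ≤ M^4*(ν⁻¹*(ν^α)⁻¹) := by
          apply mul_le_mul_of_nonneg_left _ (by positivity : (0:ℝ) ≤ M^4)
          exact mul_le_mul_of_nonneg_right h3b hνi
  have hsum2 : 65*u^2 + u*w + w^4 ≤ (65+M+M^4)*(ν⁻¹*(ν^α)⁻¹) := by
    linarith only [hbd1, hbd2, hbd3]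
  have hexp : |ν^(-1-α)| = ν⁻¹*(ν^α)⁻¹ := by
    have e : ν^(-1-α) = ν⁻¹*(ν^α)⁻¹ := by
      rw [show -1-α = (-1) + (-α) by ring, Real.rpow_add hν0, Real.rpow_neg_one,
        Real.rpow_neg hν0.le]
    rw [e, abs_of_nonneg (mul_nonneg (inv_nonneg.mpr hν0.le) (inv_nonneg.mpr hνα0.le))]
  calc |Npoly α c₁ c₂ u w r1 r2 rm1 rm2|
        / ((c₁*c₂)^(3:ℕ) * Xpoly c₁ c₂ w a1 a2 * Xppoly c₁ c₂ w am1 am2)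
      ≤ |Npoly α c₁ c₂ u w r1 r2 rm1 rm2| / (c₁*c₂)^(5:ℕ) :=
        div_le_div_of_nonneg_left (abs_nonneg _) hg5 hdenlow
    _ ≤ (C1 * (65*u^2 + u*w + w^4)) / (c₁*c₂)^(5:ℕ) :=
        (div_le_div_iff_of_pos_right hg5).mpr hNb
    _ ≤ (C1 * ((65+M+M^4)*(ν⁻¹*(ν^α)⁻¹))) / (c₁*c₂)^(5:ℕ) :=
        (div_le_div_iff_of_pos_right hg5).mpr (mul_le_mul_of_nonneg_left hsum2 hC10.le)
    _ = C * (ν⁻¹*(ν^α)⁻¹) := by rw [hCdef]; ring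
    _ = C * |ν^(-1-α)| := by rw [hexp]
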